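/- arXiv:0807.2952 — 3 statements merged into one kernel-verified Lean document; each statement's English description precedes it below -/
import Mathlib

section
/- Assume the drift condition: there exist a measurable V : X → [1,∞), a measurable set C ⊆ X, constants b, c > 0 and 0 < α ≤ 1 such that P_θV ≤ V − c V^{1−α} + b·1_C for every θ ∈ Θ. Then there exists a constant b̄ < ∞ (depending only on b, c, α) such that for every j ≥ 0, every 0 ≤ β ≤ 1, every l ≥ 0 and every (x,θ) ∈ X × Θ, E^{(l)}_{x,θ}[V^β(X_j)] ≤ V^β(x) + b̄ j^β. -/
open MeasureTheory ProbabilityTheory Filter Set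
open scoped ENNReal NNReal Classical

noncomputable section

namespace AdaptiveMCMC

variable {X Θ : Type*} [MeasurableSpace X] [MeasurableSpace Θ]

/-- The `W`-weighted norm distance between two measures:
`‖μ − ν‖_W = sup { |μ(g) − ν(g)| : g measurable, |g| ≤ W }`. -/
def wDist (W : X → ℝ) (μ ν : Measure X) : ℝ :=
  ⨆ g : {g : X → ℝ // Measurable g ∧ ∀ x, |g x| ≤ W x},
    |(∫ x, g.1 x ∂μ) - ∫ x, g.1 x ∂ν|

/-- Total variation distance `‖μ − ν‖_TV = sup { |μ(f) − ν(f)| : |f| ≤ 1 }`. -/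
def tvDist (μ ν : Measure X) : ℝ := wDist (fun _ => 1) μ ν

/-- `D(θ,θ') = sup_x ‖P_θ(x,·) − P_θ'(x,·)‖_TV`. -/
def Dtv (P : Θ → Kernel X X) (θ θ' : Θ) : ℝ := ⨆ x : X, tvDist (P θ x) (P θ' x)

/-- Iterates `P^n` of a kernel. -/
def kpow (P : Kernel X X) : ℕ → Kernel X X
  | 0 => Kernel.id
  | n + 1 => (kpow P n) ∘ₖ P

/-- Prepend a state to a path. -/
def prepend {α : Type*} (z : α) (ω : ℕ → α) : ℕ → α
  | 0 => z
  | n + 1 => ω n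

/-- `law l (x,θ)` is the law `P^{(l)}_{x,θ}` of the canonical nonhomogeneous Markov chain
`{Z_n = (X_n, θ_n)}` started at `(x,θ)` whose `n`-th transition kernel is `P̄(l+n)`. -/
structure IsAdaptiveLaw (Pbar : ℕ → Kernel (X × Θ) (X × Θ))
    (law : ℕ → X × Θ → Measure (ℕ → X × Θ)) : Prop where
  prob : ∀ l z, IsProbabilityMeasure (law l z)
  meas : ∀ l, Measurable (law l)
  step : ∀ l z, law l z = (Pbar l z).bind fun z' => (law (l + 1) z').map (prepend z)

/-- The marginal compatibility `∫_{A×Θ} P̄(n;(x,θ);(dx',dθ')) = P_θ(x,A)`. -/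
def Compat (P : Θ → Kernel X X) (Pbar : ℕ → Kernel (X × Θ) (X × Θ)) : Prop :=
  ∀ (n : ℕ) (x : X) (θ : Θ) (A : Set X), MeasurableSet A →
    Pbar n (x, θ) (A ×ˢ (Set.univ : Set Θ)) = P θ x A

/-- Law of the chain with initial distribution `ξ1 ⊗ ξ2` (and `l = 0`). -/
def chainLaw (law : ℕ → X × Θ → Measure (ℕ → X × Θ)) (ξ1 : Measure X) (ξ2 : Measure Θ) :
    Measure (ℕ → X × Θ) :=
  (ξ1.prod ξ2).bind (law 0)

/-- Return time `τ_C = inf {n ≥ 1 : X_n ∈ C}` (equal to `⊤` if no such `n`). -/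
def hitTime (C : Set X) (ω : ℕ → X × Θ) : ℕ∞ :=
  ⨅ m : {m : ℕ // 1 ≤ m ∧ (ω m).1 ∈ C}, (m.1 : ℕ∞)

/-- Evaluation of `r : ℕ → ℝ` at an extended natural, with value `∞` at `∞`. -/
def rEval (r : ℕ → ℝ) : ℕ∞ → ℝ≥0∞ := fun t =>
  if t = ⊤ then ⊤ else ENNReal.ofReal (r t.toNat)

end AdaptiveMCMC

namespace AdaptiveMCMC

/-- Tangent line inequality for `rpow` (real version). -/
lemma real_tangent' {β s u : ℝ} (hβ0 : 0 ≤ β) (hβ1 : β ≤ 1) (hs : 1 ≤ s) (hu : 0 ≤ u) :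
    u ^ β + β * s ^ β ≤ s ^ β + β * s ^ (β - 1) * u := by
  have hs0 : (0 : ℝ) < s := lt_of_lt_of_le one_pos hs
  have hv : 0 ≤ u / s := div_nonneg hu hs0.le
  have key : (u / s) ^ β ≤ 1 + β * (u / s - 1) := by
    have h := rpow_one_add_le_one_add_mul_self (s := u / s - 1) (by linarith) hβ0 hβ1
    simpa using h
  have hsb : (0 : ℝ) < s ^ β := Real.rpow_pos_of_pos hs0 β
  have h2 : u ^ β = (u / s) ^ β * s ^ β := by
    rw [Real.div_rpow hu hs0.le]
    field_simp
  have h4 : β * s ^ (β - 1) * u = β * (u / s) * s ^ β := by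
    rw [Real.rpow_sub_one hs0.ne']
    field_simp
  rw [h2, h4]
  nlinarith [key, hsb]

/-- Tangent line inequality for `rpow` (ENNReal version). -/
lemma ennreal_tangent' {β s : ℝ} (hβ0 : 0 < β) (hβ1 : β ≤ 1) (hs : 1 ≤ s) (t : ℝ≥0∞) :
    t ^ β + ENNReal.ofReal (β * s ^ β) ≤
      ENNReal.ofReal (s ^ β) + ENNReal.ofReal (β * s ^ (β - 1)) * t := by
  have hs0 : (0 : ℝ) < s := lt_of_lt_of_le one_pos hs
  rcases eq_or_ne t ⊤ with rfl | ht
  · have h1 : (⊤ : ℝ≥0∞) ^ β = ⊤ := ENNReal.top_rpow_of_pos hβ0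
    have h2 : ENNReal.ofReal (β * s ^ (β - 1)) ≠ 0 := by
      simp only [ne_eq, ENNReal.ofReal_eq_zero, not_le]
      positivity
    rw [h1, ENNReal.mul_top h2]
    simp
  · have hu : 0 ≤ t.toReal := ENNReal.toReal_nonneg
    conv_lhs => rw [← ENNReal.ofReal_toReal ht]
    conv_rhs => rw [← ENNReal.ofReal_toReal ht]
    rw [ENNReal.ofReal_rpow_of_nonneg hu hβ0.le,
      ← ENNReal.ofReal_add (by positivity) (by positivity),
      ← ENNReal.ofReal_mul (by positivity), ← ENNReal.ofReal_add (by positivity) (by positivity)]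
    exact ENNReal.ofReal_le_ofReal (real_tangent' hβ0.le hβ1 hs hu)

/-- Jensen's inequality for concave power functions, in the form we need. -/
lemma jensen_rpow' {Y : Type*} [MeasurableSpace Y] {μ : Measure Y} [IsProbabilityMeasure μ]
    {f : Y → ℝ≥0∞} (hf : Measurable f) {β s : ℝ} (hβ0 : 0 < β) (hβ1 : β ≤ 1) (hs : 1 ≤ s)
    (hint : ∫⁻ y, f y ∂μ ≤ ENNReal.ofReal s) :
    ∫⁻ y, (f y) ^ β ∂μ ≤ ENNReal.ofReal (s ^ β) := by
  have hs0 : (0 : ℝ) < s := lt_of_lt_of_le one_pos hs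
  have h3 : s ^ (β - 1) * s = s ^ β := by
    rw [Real.rpow_sub_one hs0.ne']; field_simp
  have key : (∫⁻ y, (f y) ^ β ∂μ) + ENNReal.ofReal (β * s ^ β)
      ≤ ENNReal.ofReal (s ^ β) + ENNReal.ofReal (β * s ^ β) := by
    calc (∫⁻ y, (f y) ^ β ∂μ) + ENNReal.ofReal (β * s ^ β)
        = ∫⁻ y, ((f y) ^ β + ENNReal.ofReal (β * s ^ β)) ∂μ := by
          rw [lintegral_add_right _ measurable_const, lintegral_const, measure_univ, mul_one]
      _ ≤ ∫⁻ y, (ENNReal.ofReal (s ^ β) + ENNReal.ofReal (β * s ^ (β - 1)) * f y) ∂μ :=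
          lintegral_mono fun y => ennreal_tangent' hβ0 hβ1 hs (f y)
      _ = ENNReal.ofReal (s ^ β) + ENNReal.ofReal (β * s ^ (β - 1)) * ∫⁻ y, f y ∂μ := by
          rw [lintegral_add_left measurable_const, lintegral_const, measure_univ, mul_one,
            lintegral_const_mul _ hf]
      _ ≤ ENNReal.ofReal (s ^ β) + ENNReal.ofReal (β * s ^ (β - 1)) * ENNReal.ofReal s := by
          gcongr
      _ = ENNReal.ofReal (s ^ β) + ENNReal.ofReal (β * s ^ β) := by
          rw [← ENNReal.ofReal_mul (by positivity)]
          congr 1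
          rw [mul_assoc, h3]
  exact (ENNReal.add_le_add_iff_right ENNReal.ofReal_ne_top).mp key

/-- Subadditivity of `x ↦ x ^ β` for `β ∈ [0,1]`. -/
lemma real_rpow_add_le' {a b' β : ℝ} (ha : 0 ≤ a) (hb : 0 ≤ b') (hβ0 : 0 ≤ β) (hβ1 : β ≤ 1) :
    (a + b') ^ β ≤ a ^ β + b' ^ β := by
  have h := NNReal.rpow_add_le_add_rpow (Real.toNNReal a) (Real.toNNReal b') hβ0 hβ1
  have h2 := NNReal.coe_le_coe.2 h
  rw [← Real.toNNReal_add ha hb] at h2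
  simpa [NNReal.coe_rpow, Real.coe_toNNReal _ ha, Real.coe_toNNReal _ hb,
    Real.coe_toNNReal _ (add_nonneg ha hb)] using h2


/-- Proposition 4.5(i): modulated moments of the adaptive chain under the drift condition. -/
theorem modulated_moment_bound
    {X Θ : Type*} [MeasurableSpace X] [MeasurableSpace Θ]
    (P : Θ → Kernel X X) (hPm : ∀ θ, IsMarkovKernel (P θ))
    (hPθmeas : ∀ (x : X) (A : Set X), MeasurableSet A → Measurable fun θ => P θ x A)
    (Pbar : ℕ → Kernel (X × Θ) (X × Θ)) (hPbarm : ∀ n, IsMarkovKernel (Pbar n))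
    (hcompat : Compat P Pbar)
    (law : ℕ → X × Θ → Measure (ℕ → X × Θ)) (hlaw : IsAdaptiveLaw Pbar law)
    (V : X → ℝ) (hVmeas : Measurable V) (hV1 : ∀ x, 1 ≤ V x)
    (C : Set X) (hCmeas : MeasurableSet C)
    (α b c : ℝ) (hα0 : 0 < α) (hα1 : α ≤ 1) (hb : 0 < b) (hc : 0 < c)
    (hdrift : ∀ (θ : Θ) (x : X),
        (∫⁻ y, ENNReal.ofReal (V y) ∂(P θ x)) ≤
          ENNReal.ofReal (V x - c * V x ^ (1 - α) + b * C.indicator (fun _ => (1 : ℝ)) x)) :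
    ∃ bb : ℝ, ∀ (j : ℕ) (β : ℝ), 0 ≤ β → β ≤ 1 → ∀ (l : ℕ) (x : X) (θ : Θ),
      (∫⁻ ω, ENNReal.ofReal (V ((ω j).1) ^ β) ∂(law l (x, θ))) ≤
        ENNReal.ofReal (V x ^ β + bb * (j : ℝ) ^ β) := by
  -- measurability of `prepend`
  have hprep : ∀ z : X × Θ, Measurable (prepend (α := X × Θ) z) := by
    intro z
    apply measurable_pi_lambda
    intro n
    cases n with
    | zero => exact measurable_const
    | succ n => exact measurable_pi_apply n
  have hfm : ∀ j : ℕ, Measurable fun ω : ℕ → X × Θ => ENNReal.ofReal (V ((ω j).1)) :=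
    fun j => (hVmeas.comp (measurable_fst.comp (measurable_pi_apply j))).ennreal_ofReal
  -- one-step decomposition of integrals against the law
  have hstep : ∀ (l : ℕ) (z : X × Θ) (f : (ℕ → X × Θ) → ℝ≥0∞), Measurable f →
      ∫⁻ ω, f ω ∂(law l z) = ∫⁻ z', ∫⁻ ω, f (prepend z ω) ∂(law (l+1) z') ∂(Pbar l z) := by
    intro l z f hf
    have hm : Measurable fun z' : X × Θ => (law (l+1) z').map (prepend z) :=
      (Measure.measurable_map _ (hprep z)).comp (hlaw.meas (l+1))
    rw [hlaw.step l z, Measure.lintegral_bind hm.aemeasurable hf.aemeasurable]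
    exact lintegral_congr fun z' => lintegral_map hf (hprep z)
  -- marginal compatibility as a pushforward
  have hmarg : ∀ (n : ℕ) (x : X) (θ : Θ), (Pbar n (x, θ)).map Prod.fst = P θ x := by
    intro n x θ
    ext A hA
    rw [Measure.map_apply measurable_fst hA, ← hcompat n x θ A hA]
    congr 1
    exact Set.prod_univ.symm
  -- first moment bound
  have moment1 : ∀ (j l : ℕ) (x : X) (θ : Θ),
      ∫⁻ ω, ENNReal.ofReal (V ((ω j).1)) ∂(law l (x, θ)) ≤ ENNReal.ofReal (V x + b * j) := by
    intro j
    induction j with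
    | zero =>
      intro l x θ
      rw [hstep l (x, θ) _ (hfm 0)]
      have h0 : ∀ (ω : ℕ → X × Θ), prepend (x, θ) ω 0 = (x, θ) := fun _ => rfl
      simp only [h0]
      have h1 : ∀ z' : X × Θ,
          ∫⁻ _ω, ENNReal.ofReal (V x) ∂(law (l+1) z') = ENNReal.ofReal (V x) := fun z' => by
        haveI := hlaw.prob (l+1) z'
        simp
      simp only [h1]
      haveI := hPbarm l
      rw [lintegral_const, measure_univ, mul_one]
      simp
    | succ j ih =>
      intro l x θ
      rw [hstep l (x, θ) _ (hfm (j+1))]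
      have h0 : ∀ (ω : ℕ → X × Θ), prepend (x, θ) ω (j+1) = ω j := fun _ => rfl
      simp only [h0]
      haveI := hPbarm l
      calc ∫⁻ z', ∫⁻ ω, ENNReal.ofReal (V ((ω j).1)) ∂(law (l+1) z') ∂(Pbar l (x, θ))
          ≤ ∫⁻ z', ENNReal.ofReal (V z'.1 + b * j) ∂(Pbar l (x, θ)) :=
            lintegral_mono fun z' => by simpa using ih (l+1) z'.1 z'.2
        _ = ∫⁻ z', (ENNReal.ofReal (V z'.1) + ENNReal.ofReal (b * j)) ∂(Pbar l (x, θ)) := by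
            refine lintegral_congr fun z' => ?_
            rw [ENNReal.ofReal_add (by linarith [hV1 z'.1])
              (mul_nonneg hb.le (Nat.cast_nonneg j))]
        _ = (∫⁻ z', ENNReal.ofReal (V z'.1) ∂(Pbar l (x, θ))) + ENNReal.ofReal (b * j) := by
            rw [lintegral_add_right _ measurable_const, lintegral_const, measure_univ, mul_one]
        _ ≤ ENNReal.ofReal (V x + b) + ENNReal.ofReal (b * j) := by
            gcongr
            have hmap : ∫⁻ z', ENNReal.ofReal (V z'.1) ∂(Pbar l (x, θ))
                = ∫⁻ x', ENNReal.ofReal (V x') ∂(P θ x) := by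
              rw [← hmarg l x θ, lintegral_map hVmeas.ennreal_ofReal measurable_fst]
            rw [hmap]
            refine (hdrift θ x).trans (ENNReal.ofReal_le_ofReal ?_)
            have h5 : 0 ≤ c * V x ^ (1 - α) :=
              mul_nonneg hc.le (Real.rpow_nonneg (by linarith [hV1 x]) _)
            have h6 : C.indicator (fun _ => (1 : ℝ)) x ≤ 1 := by
              by_cases h : x ∈ C <;> simp [h]
            nlinarith [mul_le_mul_of_nonneg_left h6 hb.le]
        _ = ENNReal.ofReal (V x + b * ((j : ℝ) + 1)) := by
            rw [← ENNReal.ofReal_add (by linarith [hV1 x])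
              (mul_nonneg hb.le (Nat.cast_nonneg j))]
            congr 1
            ring
        _ = ENNReal.ofReal (V x + b * ((j + 1 : ℕ) : ℝ)) := by push_cast; ring_nf
  refine ⟨max b 1, ?_⟩
  intro j β hβ0 hβ1 l x θ
  haveI := hlaw.prob l (x, θ)
  have hbb0 : (0 : ℝ) ≤ max b 1 := le_trans zero_le_one (le_max_right b 1)
  rcases eq_or_lt_of_le hβ0 with hβ | hβ
  · -- β = 0
    rw [← hβ]
    simp only [Real.rpow_zero, ENNReal.ofReal_one, lintegral_one, measure_univ, mul_one]
    rw [show (1 : ℝ≥0∞) = ENNReal.ofReal 1 from ENNReal.ofReal_one.symm]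
    exact ENNReal.ofReal_le_ofReal (by linarith)
  · -- 0 < β
    have hVx1 : 1 ≤ V x := hV1 x
    have hbj : (0 : ℝ) ≤ b * j := mul_nonneg hb.le (Nat.cast_nonneg j)
    have hs : 1 ≤ V x + b * j := by linarith
    have hJ := jensen_rpow' (μ := law l (x, θ))
      (f := fun ω => ENNReal.ofReal (V ((ω j).1))) (hfm j) hβ hβ1 hs (moment1 j l x θ)
    have hLHS : ∫⁻ ω, ENNReal.ofReal (V ((ω j).1) ^ β) ∂(law l (x, θ))
        = ∫⁻ ω, (ENNReal.ofReal (V ((ω j).1))) ^ β ∂(law l (x, θ)) :=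
      lintegral_congr fun ω =>
        (ENNReal.ofReal_rpow_of_nonneg (by linarith [hV1 ((ω j).1)]) hβ0).symm
    rw [hLHS]
    refine hJ.trans (ENNReal.ofReal_le_ofReal ?_)
    have h1 : (V x + b * j) ^ β ≤ (V x) ^ β + (b * j) ^ β :=
      real_rpow_add_le' (by linarith) hbj hβ0 hβ1
    have h2 : (b * (j : ℝ)) ^ β = b ^ β * (j : ℝ) ^ β :=
      Real.mul_rpow hb.le (Nat.cast_nonneg j)
    have h3 : b ^ β ≤ max b 1 := by
      rcases le_total b 1 with h | h
      · calc b ^ β ≤ 1 ^ β := Real.rpow_le_rpow hb.le h hβ0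
          _ = 1 := Real.one_rpow β
          _ ≤ max b 1 := le_max_right b 1
      · calc b ^ β ≤ b ^ (1 : ℝ) := Real.rpow_le_rpow_of_exponent_le h hβ1
          _ = b := Real.rpow_one b
          _ ≤ max b 1 := le_max_left b 1
    have h4 : (0 : ℝ) ≤ (j : ℝ) ^ β := Real.rpow_nonneg (Nat.cast_nonneg j) β
    have h5 : (b * (j : ℝ)) ^ β ≤ max b 1 * (j : ℝ) ^ β := by
      rw [h2]; exact mul_le_mul_of_nonneg_right h3 h4
    linarith

end AdaptiveMCMC
end
end

section
/- Assume the drift condition: there exist a measurable V : X → [1,∞), a measurable set C ⊆ X, constants b, c > 0 and 0 < α ≤ 1 such that P_θV ≤ V − c V^{1−α} + b·1_C for every θ ∈ Θ. Then there exists a constant b̄ < ∞ (depending only on b, c, α) such that for every 0 ≤ β ≤ 1 − α, 0 < a < 1, every q ∈ [1,∞] (with the convention 1/q = 0 when q = ∞), every l ≥ 0, (x,θ) ∈ X × Θ, and every stopping time τ of the natural filtration, E^{(l)}_{x,θ}[ Σ_{j=0}^{τ−1} (1−a)^j V^β(X_j) ] ≤ a^{1/q − 1} (1−a)^{−1/q}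 (αc)^{−1/q} V^{β+α/q}(x) · ( 1 + b̄ E^{(l)}_{x,θ}[ Σ_{j=0}^{τ−1} (1−a)^j 1_C(X_j) ] ). -/
open MeasureTheory ProbabilityTheory Filter Set
open scoped ENNReal NNReal Classical

noncomputable section

namespace AdaptiveMCMC

variable {X Θ : Type*} [MeasurableSpace X] [MeasurableSpace Θ]

/-- The natural filtration `F_k = σ(Z_0,…,Z_k)` on the canonical path space. -/
def pathFiltration (X Θ : Type*) [MeasurableSpace X] [MeasurableSpace Θ] (k : ℕ) :
    MeasurableSpace (ℕ → X × Θ) :=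
  MeasurableSpace.comap (fun ω (i : Fin (k + 1)) => ω i.1) inferInstance

/-- `τ` is a stopping time for the natural filtration of the canonical chain. -/
def IsPathStoppingTime (τ : (ℕ → X × Θ) → ℕ∞) : Prop :=
  ∀ k : ℕ, MeasurableSet[pathFiltration X Θ k] {ω | τ ω = (k : ℕ∞)}

end AdaptiveMCMC
namespace AdaptiveMCMC

variable {X Θ : Type*} [MeasurableSpace X] [MeasurableSpace Θ]

lemma measurable_prepend (z : X × Θ) : Measurable (prepend z) := by
  apply measurable_pi_lambda
  intro n
  cases n with
  | zero => exact measurable_const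
  | succ n => exact measurable_pi_apply n

lemma coord_meas_path (k j : ℕ) (h : j ≤ k) :
    Measurable[pathFiltration X Θ k] (fun ω : ℕ → X × Θ => ω j) := by
  have : (fun ω : ℕ → X × Θ => ω j) =
      (fun v : Fin (k + 1) → X × Θ => v ⟨j, by omega⟩) ∘
        (fun ω (i : Fin (k + 1)) => ω i.1) := rfl
  rw [this]
  exact (measurable_pi_apply _).comp (Measurable.of_comap_le le_rfl)

lemma pathFiltration_le (k : ℕ) :
    pathFiltration X Θ k ≤ (inferInstance : MeasurableSpace (ℕ → X × Θ)) := by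
  rintro s ⟨t, ht, rfl⟩
  exact (measurable_pi_lambda _ fun i => measurable_pi_apply i.1) ht

lemma pathFiltration_mono {j k : ℕ} (h : j ≤ k) :
    pathFiltration X Θ j ≤ pathFiltration X Θ k := by
  rintro s ⟨t, ht, rfl⟩
  refine ⟨(fun v : Fin (k + 1) → X × Θ => fun i : Fin (j + 1) => v ⟨i.1, by omega⟩) ⁻¹' t,
    (measurable_pi_lambda _ fun i => measurable_pi_apply _) ht, rfl⟩

lemma measurable_prepend_path (z : X × Θ) (k : ℕ) :
    @Measurable _ _ (pathFiltration X Θ k) (pathFiltration X Θ (k + 1)) (prepend z) := by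
  refine Measurable.of_comap_le ?_
  have hpf : pathFiltration X Θ (k + 1) =
      MeasurableSpace.comap (fun ω (i : Fin (k + 2)) => ω i.1) inferInstance := rfl
  rw [hpf, MeasurableSpace.comap_comp]
  refine Measurable.comap_le ?_
  refine (@measurable_pi_iff _ _ _ (pathFiltration X Θ k) _ _).mpr ?_
  rintro ⟨i, hi⟩
  cases i with
  | zero => exact measurable_const
  | succ n => exact coord_meas_path k n (by omega)

lemma measurableSet_lt_stop {τ : (ℕ → X × Θ) → ℕ∞} (hτ : IsPathStoppingTime τ) (j : ℕ) :
    MeasurableSet {ω | (j : ℕ∞) < τ ω} := by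
  have : {ω | (j : ℕ∞) < τ ω} = (⋃ k ∈ Finset.range (j + 1), {ω | τ ω = (k : ℕ∞)})ᶜ := by
    ext ω
    simp only [Set.mem_setOf_eq, Set.mem_compl_iff, Set.mem_iUnion, Finset.mem_range,
      not_exists]
    constructor
    · intro hlt k hk hek
      rw [hek] at hlt
      exact absurd hlt (by exact_mod_cast Nat.not_lt.2 (by omega))
    · intro hne
      by_contra hcon
      push_neg at hcon
      rcases WithTop.le_coe_iff.1 hcon with ⟨m, hm, hmj⟩
      exact hne m (by omega) hm
  rw [this]
  refine (MeasurableSet.biUnion (Finset.range (j + 1)).countable_toSet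
    (fun k _ => pathFiltration_le k _ (hτ k))).compl

/-- Shifted stopping time after one step from `z`. -/
def shiftStop (τ : (ℕ → X × Θ) → ℕ∞) (z : X × Θ) : (ℕ → X × Θ) → ℕ∞ :=
  fun ω' => τ (prepend z ω') - 1

lemma isPathStoppingTime_shiftStop {τ : (ℕ → X × Θ) → ℕ∞} (hτ : IsPathStoppingTime τ)
    (z : X × Θ) : IsPathStoppingTime (shiftStop τ z) := by
  have key : ∀ (t : ℕ∞) (k : ℕ), k ≠ 0 → (t - 1 = (k : ℕ∞) ↔ t = ((k + 1 : ℕ) : ℕ∞)) := by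
    intro t k hk
    induction t using ENat.recTopCoe with
    | top =>
      have h1 : (⊤ : ℕ∞) - 1 = ⊤ := by simp
      rw [h1]
      constructor
      · intro h; exact absurd h.symm (WithTop.coe_ne_top)
      · intro h; exact absurd h.symm (WithTop.coe_ne_top)
    | coe m =>
      have hsub : ((m : ℕ∞) - 1) = ((m - 1 : ℕ) : ℕ∞) := by exact_mod_cast rfl
      rw [hsub]
      norm_cast
      omega
  have key0 : ∀ (t : ℕ∞), (t - 1 = ((0 : ℕ) : ℕ∞) ↔ (t = ((0 : ℕ) : ℕ∞) ∨ t = ((1 : ℕ) : ℕ∞))) := by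
    intro t
    induction t using ENat.recTopCoe with
    | top =>
      have h1 : (⊤ : ℕ∞) - 1 = ⊤ := by simp
      rw [h1]
      constructor
      · intro h; exact absurd h.symm (WithTop.coe_ne_top)
      · rintro (h | h) <;> exact absurd h.symm (WithTop.coe_ne_top)
    | coe m =>
      have hsub : ((m : ℕ∞) - 1) = ((m - 1 : ℕ) : ℕ∞) := by exact_mod_cast rfl
      rw [hsub]
      norm_cast
      omega
  intro k
  rcases eq_or_ne k 0 with h0 | h0
  · subst h0
    have hset : {ω' | shiftStop τ z ω' = ((0 : ℕ) : ℕ∞)} =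
        prepend z ⁻¹' ({ω | τ ω = ((0 : ℕ) : ℕ∞)} ∪ {ω | τ ω = ((1 : ℕ) : ℕ∞)}) := by
      ext ω'
      simp only [Set.mem_setOf_eq, Set.mem_preimage, Set.mem_union, shiftStop]
      exact key0 _
    rw [show ((0 : ℕ) : ℕ∞) = ((0 : ℕ) : ℕ∞) from rfl, hset]
    have h01 : MeasurableSet[pathFiltration X Θ 1] {ω : ℕ → X × Θ | τ ω = ((0 : ℕ) : ℕ∞)} :=
      pathFiltration_mono (by omega) _ (hτ 0)
    have h11 : MeasurableSet[pathFiltration X Θ 1] {ω : ℕ → X × Θ | τ ω = ((1 : ℕ) : ℕ∞)} := hτ 1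
    exact measurable_prepend_path z 0 (MeasurableSet.union h01 h11)
  · have hset : {ω' | shiftStop τ z ω' = (k : ℕ∞)} =
        prepend z ⁻¹' {ω | τ ω = ((k + 1 : ℕ) : ℕ∞)} := by
      ext ω'
      simp only [Set.mem_setOf_eq, Set.mem_preimage, shiftStop]
      exact key _ k h0
    rw [hset]
    exact measurable_prepend_path z k (hτ (k + 1))

lemma lintegral_law_step {Pbar : ℕ → Kernel (X × Θ) (X × Θ)}
    {law : ℕ → X × Θ → Measure (ℕ → X × Θ)} (hlaw : IsAdaptiveLaw Pbar law)
    (l : ℕ) (z : X × Θ) {G : (ℕ → X × Θ) → ℝ≥0∞} (hG : Measurable G) :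
    ∫⁻ ω, G ω ∂(law l z) =
      ∫⁻ z', ∫⁻ ω', G (prepend z ω') ∂(law (l + 1) z') ∂(Pbar l z) := by
  have hM : Measurable (fun z' : X × Θ => (law (l + 1) z').map (prepend z)) :=
    (Measure.measurable_map _ (measurable_prepend z)).comp (hlaw.meas (l + 1))
  rw [hlaw.step l z, Measure.lintegral_bind hM.aemeasurable hG.aemeasurable]
  refine lintegral_congr fun z' => ?_
  exact lintegral_map hG (measurable_prepend z)

lemma lintegral_fst_Pbar {P : Θ → Kernel X X} {Pbar : ℕ → Kernel (X × Θ) (X × Θ)}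
    (hcompat : Compat P Pbar) (l : ℕ) (x : X) (θ : Θ)
    {W : X → ℝ≥0∞} (hW : Measurable W) :
    ∫⁻ z', W z'.1 ∂(Pbar l (x, θ)) = ∫⁻ y, W y ∂(P θ x) := by
  have hmap : (Pbar l (x, θ) : Measure (X × Θ)).map Prod.fst = P θ x := by
    ext A hA
    rw [Measure.map_apply measurable_fst hA]
    have hpre : (Prod.fst ⁻¹' A : Set (X × Θ)) = A ×ˢ (Set.univ : Set Θ) := by
      ext p; simp [Set.mem_prod]
    rw [hpre]
    exact hcompat l x θ A hA
  rw [← hmap, lintegral_map hW measurable_fst]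

lemma tau_zero_const {τ : (ℕ → X × Θ) → ℕ∞} (hτ : IsPathStoppingTime τ) (z : X × Θ)
    (ω₁ ω₂ : ℕ → X × Θ) : τ (prepend z ω₁) = 0 ↔ τ (prepend z ω₂) = 0 := by
  obtain ⟨t, ht, hset⟩ := hτ 0
  have hmem : ∀ ω : ℕ → X × Θ, (τ ω = ((0 : ℕ) : ℕ∞)) ↔ (fun i : Fin 1 => ω i.1) ∈ t := by
    intro ω
    constructor
    · intro h
      have : ω ∈ {ω | τ ω = ((0 : ℕ) : ℕ∞)} := h
      rw [← hset] at this
      exact this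
    · intro h
      have : ω ∈ (fun ω (i : Fin 1) => ω i.1) ⁻¹' t := h
      rw [hset] at this
      exact this
  have hfix : ∀ ω' : ℕ → X × Θ, (fun i : Fin 1 => prepend z ω' i.1) = fun _ : Fin 1 => z := by
    intro ω'
    funext i
    have hi : i.1 = 0 := Nat.lt_one_iff.mp i.2
    rw [hi]
    rfl
  have h0 : ((0 : ℕ) : ℕ∞) = (0 : ℕ∞) := rfl
  rw [← h0, hmem, hmem, hfix, hfix]

lemma enat_succ_lt_iff : ∀ (t : ℕ∞) (j : ℕ), t ≠ 0 → (((j + 1 : ℕ) : ℕ∞) < t ↔ (j : ℕ∞) < t - 1) := by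
  intro t j ht
  induction t using ENat.recTopCoe with
  | top =>
    have h1 : (⊤ : ℕ∞) - 1 = ⊤ := by simp
    rw [h1]
    exact iff_of_true (WithTop.coe_lt_top _) (WithTop.coe_lt_top _)
  | coe m =>
    have hsub : ((m : ℕ∞) - 1) = ((m - 1 : ℕ) : ℕ∞) := by exact_mod_cast rfl
    have hm : m ≠ 0 := by
      intro h; exact ht (by exact_mod_cast h)
    rw [hsub]
    norm_cast
    omega

lemma core_comparison
    {P : Θ → Kernel X X} {Pbar : ℕ → Kernel (X × Θ) (X × Θ)}
    (hPbarm : ∀ n, IsMarkovKernel (Pbar n)) (hcompat : Compat P Pbar)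
    {law : ℕ → X × Θ → Measure (ℕ → X × Θ)} (hlaw : IsAdaptiveLaw Pbar law)
    {C : Set X} (hC : MeasurableSet C)
    {W g : X → ℝ≥0∞} (hW : Measurable W) (hg : Measurable g) (B : ℝ≥0∞)
    {a' : ℝ≥0∞} (ha' : a' ≤ 1)
    (hdrift : ∀ (θ : Θ) (x : X),
      (∫⁻ y, W y ∂(P θ x)) + g x ≤ W x + B * (C.indicator (fun _ => 1) x)) :
    ∀ (n l : ℕ) (z : X × Θ) (τ : (ℕ → X × Θ) → ℕ∞), IsPathStoppingTime τ →
      ∑ j ∈ Finset.range n, ∫⁻ ω,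
          (if (j : ℕ∞) < τ ω then a' ^ j * ((1 - a') * W (ω j).1 + a' * g (ω j).1) else 0)
          ∂(law l z)
        ≤ W z.1 + B * ∑ j ∈ Finset.range n, ∫⁻ ω,
            (if (j : ℕ∞) < τ ω ∧ (ω j).1 ∈ C then a' ^ j else 0) ∂(law l z) := by
  have ha'top : a' ≠ ⊤ := ne_top_of_le_ne_top ENNReal.one_ne_top ha'
  have hSm : ∀ (σ : (ℕ → X × Θ) → ℕ∞), IsPathStoppingTime σ → ∀ j : ℕ,
      Measurable fun ω : ℕ → X × Θ =>
        (if (j : ℕ∞) < σ ω then a' ^ j * ((1 - a') * W (ω j).1 + a' * g (ω j).1) else 0) := by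
    intro σ hσ j
    refine Measurable.ite (measurableSet_lt_stop hσ j) ?_ measurable_const
    exact measurable_const.mul
      ((measurable_const.mul (hW.comp (measurable_fst.comp (measurable_pi_apply j)))).add
        (measurable_const.mul (hg.comp (measurable_fst.comp (measurable_pi_apply j)))))
  have hTm : ∀ (σ : (ℕ → X × Θ) → ℕ∞), IsPathStoppingTime σ → ∀ j : ℕ,
      Measurable fun ω : ℕ → X × Θ =>
        (if (j : ℕ∞) < σ ω ∧ (ω j).1 ∈ C then a' ^ j else 0) := by
    intro σ hσ j
    refine Measurable.ite ?_ measurable_const measurable_const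
    have hs : {ω : ℕ → X × Θ | (j : ℕ∞) < σ ω ∧ (ω j).1 ∈ C} =
        {ω : ℕ → X × Θ | (j : ℕ∞) < σ ω} ∩ ((fun ω : ℕ → X × Θ => (ω j).1) ⁻¹' C) := rfl
    rw [hs]
    exact (measurableSet_lt_stop hσ j).inter ((measurable_fst.comp (measurable_pi_apply j)) hC)
  intro n
  induction n with
  | zero => intro l z τ hτ; simp
  | succ n IH =>
    intro l z τ hτ
    obtain ⟨x, θ⟩ := z
    haveI hPbl : IsProbabilityMeasure ((Pbar l) (x, θ) : Measure (X × Θ)) :=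
      (hPbarm l).isProbabilityMeasure (x, θ)
    by_cases hP0 : τ (prepend (x, θ) fun _ => (x, θ)) = 0
    · -- the stopping time is a.s. 0: everything vanishes
      have hzero : ∀ j : ℕ, (∫⁻ ω,
          (if (j : ℕ∞) < τ ω then a' ^ j * ((1 - a') * W (ω j).1 + a' * g (ω j).1) else 0)
          ∂(law l (x, θ))) = 0 := by
        intro j
        rw [lintegral_law_step hlaw l (x, θ) (hSm τ hτ j)]
        have hv : ∀ ω' : ℕ → X × Θ,
            (if (j : ℕ∞) < τ (prepend (x, θ) ω') then
              a' ^ j * ((1 - a') * W ((prepend (x, θ) ω' j)).1 +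
                a' * g ((prepend (x, θ) ω' j)).1) else 0) = 0 := by
          intro ω'
          have h0 : τ (prepend (x, θ) ω') = 0 :=
            (tau_zero_const hτ (x, θ) ω' (fun _ => (x, θ))).mpr hP0
          rw [h0, if_neg (by simp)]
        simp only [hv, lintegral_zero]
      rw [Finset.sum_eq_zero fun j _ => hzero j]
      exact zero_le
    · -- the stopping time is a.s. ≥ 1
      have hpos : ∀ ω' : ℕ → X × Θ, (0 : ℕ∞) < τ (prepend (x, θ) ω') := by
        intro ω'
        refine pos_iff_ne_zero.mpr fun h => hP0 ?_
        exact (tau_zero_const hτ (x, θ) ω' (fun _ => (x, θ))).mp h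
      have hpos0 : ∀ ω' : ℕ → X × Θ, ((0 : ℕ) : ℕ∞) < τ (prepend (x, θ) ω') := by
        intro ω'; exact_mod_cast hpos ω'
      set τ' : (ℕ → X × Θ) → ℕ∞ := shiftStop τ (x, θ) with hτ'def
      have hτ' : IsPathStoppingTime τ' := isPathStoppingTime_shiftStop hτ (x, θ)
      -- inner integrals after one step
      have hIS : ∀ j : ℕ, Measurable fun z' : X × Θ => ∫⁻ ω',
          (if (j : ℕ∞) < τ' ω' then a' ^ j * ((1 - a') * W (ω' j).1 + a' * g (ω' j).1) else 0)
          ∂(law (l + 1) z') :=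
        fun j => (Measure.measurable_lintegral (hSm τ' hτ' j)).comp (hlaw.meas (l + 1))
      have hIT : ∀ j : ℕ, Measurable fun z' : X × Θ => ∫⁻ ω',
          (if (j : ℕ∞) < τ' ω' ∧ (ω' j).1 ∈ C then a' ^ j else 0) ∂(law (l + 1) z') :=
        fun j => (Measure.measurable_lintegral (hTm τ' hτ' j)).comp (hlaw.meas (l + 1))
      -- shift identities
      have hshiftS : ∀ (j : ℕ) (ω' : ℕ → X × Θ),
          (if ((j + 1 : ℕ) : ℕ∞) < τ (prepend (x, θ) ω') then
            a' ^ (j + 1) * ((1 - a') * W ((prepend (x, θ) ω' (j + 1))).1 +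
              a' * g ((prepend (x, θ) ω' (j + 1))).1) else 0) =
          a' * (if (j : ℕ∞) < τ' ω' then
            a' ^ j * ((1 - a') * W (ω' j).1 + a' * g (ω' j).1) else 0) := by
        intro j ω'
        have hpre : prepend (x, θ) ω' (j + 1) = ω' j := rfl
        have hcond : (((j + 1 : ℕ) : ℕ∞) < τ (prepend (x, θ) ω')) ↔ ((j : ℕ∞) < τ' ω') :=
          enat_succ_lt_iff _ j (hpos ω').ne'
        rw [hpre]
        by_cases hcase : (j : ℕ∞) < τ' ω'
        · rw [if_pos (hcond.mpr hcase), if_pos hcase, pow_succ]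
          ring
        · rw [if_neg (fun hh => hcase (hcond.mp hh)), if_neg hcase, mul_zero]
      have hshiftT : ∀ (j : ℕ) (ω' : ℕ → X × Θ),
          (if ((j + 1 : ℕ) : ℕ∞) < τ (prepend (x, θ) ω') ∧ ((prepend (x, θ) ω' (j + 1))).1 ∈ C
            then a' ^ (j + 1) else 0) =
          a' * (if (j : ℕ∞) < τ' ω' ∧ (ω' j).1 ∈ C then a' ^ j else 0) := by
        intro j ω'
        have hpre : prepend (x, θ) ω' (j + 1) = ω' j := rfl
        have hcond : (((j + 1 : ℕ) : ℕ∞) < τ (prepend (x, θ) ω')) ↔ ((j : ℕ∞) < τ' ω') :=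
          enat_succ_lt_iff _ j (hpos ω').ne'
        rw [hpre]
        by_cases hcase : (j : ℕ∞) < τ' ω' ∧ (ω' j).1 ∈ C
        · rw [if_pos ⟨hcond.mpr hcase.1, hcase.2⟩, if_pos hcase, pow_succ]
          ring
        · rw [if_neg (fun hh => hcase ⟨hcond.mp hh.1, hh.2⟩), if_neg hcase, mul_zero]
      -- value of the shifted S-integrals
      have hAsucc : ∀ j : ℕ, (∫⁻ ω,
          (if ((j + 1 : ℕ) : ℕ∞) < τ ω then
            a' ^ (j + 1) * ((1 - a') * W (ω (j + 1)).1 + a' * g (ω (j + 1)).1) else 0)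
          ∂(law l (x, θ))) =
          a' * ∫⁻ z', (∫⁻ ω',
            (if (j : ℕ∞) < τ' ω' then a' ^ j * ((1 - a') * W (ω' j).1 + a' * g (ω' j).1) else 0)
            ∂(law (l + 1) z')) ∂(Pbar l (x, θ)) := by
        intro j
        rw [lintegral_law_step hlaw l (x, θ) (hSm τ hτ (j + 1))]
        rw [← lintegral_const_mul a' (hIS j)]
        refine lintegral_congr fun z' => ?_
        rw [← lintegral_const_mul a' (hSm τ' hτ' j)]
        exact lintegral_congr fun ω' => hshiftS j ω'
      have hTsucc : ∀ j : ℕ, (∫⁻ ω,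
          (if ((j + 1 : ℕ) : ℕ∞) < τ ω ∧ (ω (j + 1)).1 ∈ C then a' ^ (j + 1) else 0)
          ∂(law l (x, θ))) =
          a' * ∫⁻ z', (∫⁻ ω',
            (if (j : ℕ∞) < τ' ω' ∧ (ω' j).1 ∈ C then a' ^ j else 0)
            ∂(law (l + 1) z')) ∂(Pbar l (x, θ)) := by
        intro j
        rw [lintegral_law_step hlaw l (x, θ) (hTm τ hτ (j + 1))]
        rw [← lintegral_const_mul a' (hIT j)]
        refine lintegral_congr fun z' => ?_
        rw [← lintegral_const_mul a' (hTm τ' hτ' j)]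
        exact lintegral_congr fun ω' => hshiftT j ω'
      -- value of the zeroth terms
      have hA0 : (∫⁻ ω,
          (if ((0 : ℕ) : ℕ∞) < τ ω then
            a' ^ (0 : ℕ) * ((1 - a') * W (ω 0).1 + a' * g (ω 0).1) else 0)
          ∂(law l (x, θ))) = (1 - a') * W x + a' * g x := by
        rw [lintegral_law_step hlaw l (x, θ) (hSm τ hτ 0)]
        have hv : ∀ ω' : ℕ → X × Θ,
            (if ((0 : ℕ) : ℕ∞) < τ (prepend (x, θ) ω') then
              a' ^ (0 : ℕ) * ((1 - a') * W ((prepend (x, θ) ω' 0)).1 +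
                a' * g ((prepend (x, θ) ω' 0)).1) else 0) =
            (1 - a') * W x + a' * g x := by
          intro ω'
          rw [if_pos (hpos0 ω'), pow_zero, one_mul]
          rfl
        simp only [hv]
        have hin : ∀ z' : X × Θ, (∫⁻ _, (1 - a') * W x + a' * g x ∂(law (l + 1) z')) =
            (1 - a') * W x + a' * g x := by
          intro z'
          haveI := hlaw.prob (l + 1) z'
          simp [lintegral_const]
        simp only [hin]
        simp [lintegral_const]
      have hT0 : (∫⁻ ω,
          (if ((0 : ℕ) : ℕ∞) < τ ω ∧ (ω 0).1 ∈ C then a' ^ (0 : ℕ) else 0)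
          ∂(law l (x, θ))) = C.indicator (fun _ => 1) x := by
        rw [lintegral_law_step hlaw l (x, θ) (hTm τ hτ 0)]
        have hv : ∀ ω' : ℕ → X × Θ,
            (if ((0 : ℕ) : ℕ∞) < τ (prepend (x, θ) ω') ∧ ((prepend (x, θ) ω' 0)).1 ∈ C
              then a' ^ (0 : ℕ) else 0) = C.indicator (fun _ => 1) x := by
          intro ω'
          have hpre : (prepend (x, θ) ω' 0).1 = x := rfl
          rw [hpre, Set.indicator_apply]
          by_cases hx : x ∈ C
          · rw [if_pos ⟨hpos0 ω', hx⟩, if_pos hx, pow_zero]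
          · rw [if_neg (fun hh => hx hh.2), if_neg hx]
        simp only [hv]
        have hin : ∀ z' : X × Θ, (∫⁻ _, C.indicator (fun _ => (1 : ℝ≥0∞)) x ∂(law (l + 1) z')) =
            C.indicator (fun _ => 1) x := by
          intro z'
          haveI := hlaw.prob (l + 1) z'
          simp [lintegral_const]
        simp only [hin]
        simp [lintegral_const]
      -- now assemble
      rw [Finset.sum_range_succ', Finset.sum_range_succ' (n := n)]
      calc
        (∑ j ∈ Finset.range n, ∫⁻ ω,
            (if ((j + 1 : ℕ) : ℕ∞) < τ ω then
              a' ^ (j + 1) * ((1 - a') * W (ω (j + 1)).1 + a' * g (ω (j + 1)).1) else 0)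
            ∂(law l (x, θ))) +
          (∫⁻ ω, (if ((0 : ℕ) : ℕ∞) < τ ω then
            a' ^ (0 : ℕ) * ((1 - a') * W (ω 0).1 + a' * g (ω 0).1) else 0) ∂(law l (x, θ)))
          = a' * (∫⁻ z', (∑ j ∈ Finset.range n, ∫⁻ ω',
              (if (j : ℕ∞) < τ' ω' then
                a' ^ j * ((1 - a') * W (ω' j).1 + a' * g (ω' j).1) else 0)
              ∂(law (l + 1) z')) ∂(Pbar l (x, θ))) + ((1 - a') * W x + a' * g x) := by
            rw [hA0]
            congr 1
            rw [lintegral_finset_sum _ fun j _ => hIS j, Finset.mul_sum]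
            exact Finset.sum_congr rfl fun j _ => hAsucc j
        _ ≤ a' * (∫⁻ z', (W z'.1 + B * ∑ j ∈ Finset.range n, ∫⁻ ω',
              (if (j : ℕ∞) < τ' ω' ∧ (ω' j).1 ∈ C then a' ^ j else 0)
              ∂(law (l + 1) z')) ∂(Pbar l (x, θ))) + ((1 - a') * W x + a' * g x) := by
            refine add_le_add_left (mul_le_mul_right (lintegral_mono fun z' => ?_) a') _
            exact IH (l + 1) z' τ' hτ'
        _ = a' * (∫⁻ y, W y ∂(P θ x)) + a' * g x + (1 - a') * W x +
              B * ∑ j ∈ Finset.range n, (a' * ∫⁻ z', (∫⁻ ω',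
                (if (j : ℕ∞) < τ' ω' ∧ (ω' j).1 ∈ C then a' ^ j else 0)
                ∂(law (l + 1) z')) ∂(Pbar l (x, θ))) := by
            have hWfst : Measurable fun z' : X × Θ => W z'.1 := hW.comp measurable_fst
            rw [lintegral_add_left hWfst]
            rw [lintegral_const_mul B (by
              exact Finset.measurable_sum _ fun j _ => hIT j)]
            rw [lintegral_finset_sum _ fun j _ => hIT j]
            rw [lintegral_fst_Pbar hcompat l x θ hW]
            rw [Finset.mul_sum, Finset.mul_sum]
            have : ∀ j ∈ Finset.range n, B * (a' * ∫⁻ z', (∫⁻ ω',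
                (if (j : ℕ∞) < τ' ω' ∧ (ω' j).1 ∈ C then a' ^ j else 0)
                ∂(law (l + 1) z')) ∂(Pbar l (x, θ))) =
                a' * (B * ∫⁻ z', (∫⁻ ω',
                (if (j : ℕ∞) < τ' ω' ∧ (ω' j).1 ∈ C then a' ^ j else 0)
                ∂(law (l + 1) z')) ∂(Pbar l (x, θ))) := by
              intro j _
              ring
            rw [Finset.sum_congr rfl this, mul_add, Finset.mul_sum]
            ring
        _ ≤ W x + B * C.indicator (fun _ => 1) x +
              B * ∑ j ∈ Finset.range n, (∫⁻ ω,
                (if ((j + 1 : ℕ) : ℕ∞) < τ ω ∧ (ω (j + 1)).1 ∈ C then a' ^ (j + 1) else 0)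
                ∂(law l (x, θ))) := by
            have h1 : a' * (∫⁻ y, W y ∂(P θ x)) + a' * g x + (1 - a') * W x ≤
                W x + B * C.indicator (fun _ => 1) x := by
              calc a' * (∫⁻ y, W y ∂(P θ x)) + a' * g x + (1 - a') * W x
                  = a' * ((∫⁻ y, W y ∂(P θ x)) + g x) + (1 - a') * W x := by ring
                _ ≤ a' * (W x + B * C.indicator (fun _ => 1) x) + (1 - a') * W x :=
                    add_le_add_left (mul_le_mul_right (hdrift θ x) a') _
                _ = (a' + (1 - a')) * W x + a' * (B * C.indicator (fun _ => 1) x) := by ring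
                _ ≤ 1 * W x + 1 * (B * C.indicator (fun _ => 1) x) := by
                    refine add_le_add (mul_le_mul_left ?_ _) (mul_le_mul_left ha' _)
                    rw [add_tsub_cancel_of_le ha']
                _ = W x + B * C.indicator (fun _ => 1) x := by ring
            have h2 : B * ∑ j ∈ Finset.range n, (a' * ∫⁻ z', (∫⁻ ω',
                  (if (j : ℕ∞) < τ' ω' ∧ (ω' j).1 ∈ C then a' ^ j else 0)
                  ∂(law (l + 1) z')) ∂(Pbar l (x, θ))) =
                B * ∑ j ∈ Finset.range n, (∫⁻ ω,
                  (if ((j + 1 : ℕ) : ℕ∞) < τ ω ∧ (ω (j + 1)).1 ∈ C then a' ^ (j + 1) else 0)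
                  ∂(law l (x, θ))) := by
              congr 1
              exact Finset.sum_congr rfl fun j _ => (hTsucc j).symm
            rw [h2] at *
            exact add_le_add h1 le_rfl
        _ = W x + B * ((∑ j ∈ Finset.range n, ∫⁻ ω,
              (if ((j + 1 : ℕ) : ℕ∞) < τ ω ∧ (ω (j + 1)).1 ∈ C then a' ^ (j + 1) else 0)
              ∂(law l (x, θ))) +
            (∫⁻ ω, (if ((0 : ℕ) : ℕ∞) < τ ω ∧ (ω 0).1 ∈ C then a' ^ (0 : ℕ) else 0)
              ∂(law l (x, θ)))) := by
            rw [hT0]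
            ring

lemma young_bound {a α c β s v : ℝ} (ha0 : 0 < a) (ha1 : a < 1) (hα0 : 0 < α) (hc : 0 < c)
    (hβ : 0 ≤ β) (hs0 : 0 ≤ s) (hs1 : s ≤ 1) (hv : 1 ≤ v) :
    v ^ β ≤ (a ^ (s - 1) * (1 - a) ^ (-s) * (α * c) ^ (-s)) *
      (a * v ^ (β + α * s) + (1 - a) * ((β + α * s) * c) * v ^ (β + α * s - α)) := by
  have hv0 : (0 : ℝ) < v := lt_of_lt_of_le one_pos hv
  have ha1' : (0 : ℝ) < 1 - a := by linarith
  have hαc : (0 : ℝ) < α * c := by positivity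
  set κ : ℝ := (1 - a) * (α * c) / a with hκdef
  have hκ0 : (0 : ℝ) < κ := by positivity
  set w : ℝ := v ^ α with hwdef
  have hw0 : (0 : ℝ) < w := Real.rpow_pos_of_pos hv0 α
  -- Young's inequality
  have hyoung : κ ^ s * w ^ (1 - s) ≤ s * κ + w := by
    have h := Real.geom_mean_le_arith_mean2_weighted hs0
      (by linarith : (0:ℝ) ≤ 1 - s) hκ0.le hw0.le (by ring : s + (1 - s) = 1)
    have h2 : (1 - s) * w ≤ w := by nlinarith
    linarith
  set M : ℝ := a ^ (1 - s) * (1 - a) ^ s * (α * c) ^ s with hMdef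
  have hM0 : (0 : ℝ) < M := by positivity
  have eA : a ^ (s - 1) * (1 - a) ^ (-s) * (α * c) ^ (-s) = M⁻¹ := by
    rw [hMdef, show s - 1 = -(1 - s) by ring, Real.rpow_neg ha0.le,
      Real.rpow_neg ha1'.le, Real.rpow_neg hαc.le, mul_inv, mul_inv]
  have eM : a * κ ^ s = M := by
    rw [hκdef, Real.div_rpow (by positivity) ha0.le,
      Real.mul_rpow ha1'.le hαc.le, hMdef, Real.rpow_sub ha0, Real.rpow_one]
    field_simp
  -- main multiplied inequality
  have hmain : M * v ^ β ≤ a * v ^ (β + α * s) + (1 - a) * ((β + α * s) * c) *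
      v ^ (β + α * s - α) := by
    have e1 : w ^ (1 - s) = v ^ (α * (1 - s)) := by
      rw [hwdef, ← Real.rpow_mul hv0.le]
    have e2 : v ^ (α * (1 - s)) * v ^ (β + α * s - α) = v ^ β := by
      rw [← Real.rpow_add hv0]
      congr 1
      ring
    have e3 : v ^ α * v ^ (β + α * s - α) = v ^ (β + α * s) := by
      rw [← Real.rpow_add hv0]
      congr 1
      ring
    have hvp : (0 : ℝ) < v ^ (β + α * s - α) := Real.rpow_pos_of_pos hv0 _
    have hy2 : a * (κ ^ s * w ^ (1 - s)) * v ^ (β + α * s - α) ≤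
        a * (s * κ + w) * v ^ (β + α * s - α) := by
      have := mul_le_mul_of_nonneg_right hyoung hvp.le
      nlinarith
    have eL : a * (κ ^ s * w ^ (1 - s)) * v ^ (β + α * s - α) = M * v ^ β := by
      rw [e1]
      calc a * (κ ^ s * v ^ (α * (1 - s))) * v ^ (β + α * s - α)
          = (a * κ ^ s) * (v ^ (α * (1 - s)) * v ^ (β + α * s - α)) := by ring
        _ = M * v ^ β := by rw [eM, e2]
    have eR : a * (s * κ + w) * v ^ (β + α * s - α) =
        a * v ^ (β + α * s) + s * ((1 - a) * (α * c)) * v ^ (β + α * s - α) := by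
      have haκ : a * κ = (1 - a) * (α * c) := by
        rw [hκdef]
        field_simp
      calc a * (s * κ + w) * v ^ (β + α * s - α)
          = s * (a * κ) * v ^ (β + α * s - α) + a * (v ^ α * v ^ (β + α * s - α)) := by
            rw [hwdef]; ring
        _ = a * v ^ (β + α * s) + s * ((1 - a) * (α * c)) * v ^ (β + α * s - α) := by
            rw [haκ, e3]; ring
    have hcoef : s * ((1 - a) * (α * c)) * v ^ (β + α * s - α) ≤
        (1 - a) * ((β + α * s) * c) * v ^ (β + α * s - α) := by
      have h1 : s * ((1 - a) * (α * c)) ≤ (1 - a) * ((β + α * s) * c) := by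
        nlinarith [mul_nonneg (mul_nonneg ha1'.le hc.le) hβ]
      exact mul_le_mul_of_nonneg_right h1 hvp.le
    calc M * v ^ β = a * (κ ^ s * w ^ (1 - s)) * v ^ (β + α * s - α) := eL.symm
      _ ≤ a * (s * κ + w) * v ^ (β + α * s - α) := hy2
      _ = a * v ^ (β + α * s) + s * ((1 - a) * (α * c)) * v ^ (β + α * s - α) := eR
      _ ≤ a * v ^ (β + α * s) + (1 - a) * ((β + α * s) * c) * v ^ (β + α * s - α) := by
          linarith
  rw [eA]
  exact (le_inv_mul_iff₀ hM0).mpr hmain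

lemma derived_drift
    {P : Θ → Kernel X X} (hPm : ∀ θ, IsMarkovKernel (P θ))
    {V : X → ℝ} (hVmeas : Measurable V) (hV1 : ∀ x, 1 ≤ V x)
    {C : Set X} {α b c : ℝ} (hα0 : 0 < α) (hα1 : α ≤ 1) (hb : 0 < b) (hc : 0 < c)
    (hdrift : ∀ (θ : Θ) (x : X),
        (∫⁻ y, ENNReal.ofReal (V y) ∂(P θ x)) ≤
          ENNReal.ofReal (V x - c * V x ^ (1 - α) + b * C.indicator (fun _ => (1 : ℝ)) x))
    {η : ℝ} (hη0 : 0 ≤ η) (hη1 : η ≤ 1) (θ : Θ) (x : X) :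
    (∫⁻ y, ENNReal.ofReal (V y ^ η) ∂(P θ x)) + ENNReal.ofReal (η * c * V x ^ (η - α)) ≤
      ENNReal.ofReal (V x ^ η) +
        ENNReal.ofReal b * (C.indicator (fun _ => (1 : ℝ≥0∞)) x) := by
  haveI : IsProbabilityMeasure ((P θ) x : Measure X) := (hPm θ).isProbabilityMeasure x
  have hVx : (0 : ℝ) < V x := lt_of_lt_of_le one_pos (hV1 x)
  set I : ℝ := C.indicator (fun _ => (1 : ℝ)) x with hIdef
  have hI01 : I = 0 ∨ I = 1 := by
    rw [hIdef, Set.indicator_apply]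
    by_cases hx : x ∈ C <;> simp [hx]
  have hI0 : 0 ≤ I := by rcases hI01 with h | h <;> simp [h]
  set R : ℝ := V x - c * V x ^ (1 - α) + b * I with hRdef
  have hR1 : (1 : ℝ) ≤ R := by
    have h1 : (1 : ℝ≥0∞) ≤ ∫⁻ y, ENNReal.ofReal (V y) ∂(P θ x) := by
      have : (1 : ℝ≥0∞) = ∫⁻ _, (1 : ℝ≥0∞) ∂(P θ x) := by simp
      rw [this]
      refine lintegral_mono fun y => ?_
      rw [show (1 : ℝ≥0∞) = ENNReal.ofReal 1 by simp]
      exact ENNReal.ofReal_le_ofReal (hV1 y)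
    exact ENNReal.one_le_ofReal.mp (le_trans h1 (hdrift θ x))
  have hR0 : (0 : ℝ) ≤ R := le_trans zero_le_one hR1
  -- tangent line inequality
  have htang : ∀ y : X, V y ^ η ≤ (1 - η) * V x ^ η + (η * V x ^ (η - 1)) * V y := by
    intro y
    have hVy : (0 : ℝ) < V y := lt_of_lt_of_le one_pos (hV1 y)
    have ht : (V y / V x) ^ η ≤ (1 - η) + η * (V y / V x) := by
      have h := Real.geom_mean_le_arith_mean2_weighted hη0
        (by linarith : (0:ℝ) ≤ 1 - η) (le_of_lt (div_pos hVy hVx)) zero_le_one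
        (by ring : η + (1 - η) = 1)
      rw [Real.one_rpow, mul_one, mul_one] at h
      linarith
    have hmul := mul_le_mul_of_nonneg_right ht (le_of_lt (Real.rpow_pos_of_pos hVx η))
    have eL : (V y / V x) ^ η * V x ^ η = V y ^ η := by
      rw [← Real.mul_rpow (by positivity) hVx.le, div_mul_cancel₀ _ hVx.ne']
    have eR : ((1 - η) + η * (V y / V x)) * V x ^ η =
        (1 - η) * V x ^ η + (η * V x ^ (η - 1)) * V y := by
      have e1 : V x ^ (η - 1) = V x ^ η / V x := by
        rw [Real.rpow_sub hVx, Real.rpow_one]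
      rw [e1]
      field_simp
    rw [eL, eR] at hmul
    exact hmul
  have hnn1 : (0:ℝ) ≤ (1 - η) * V x ^ η :=
    mul_nonneg (by linarith) (Real.rpow_pos_of_pos hVx η).le
  have hnn2 : (0:ℝ) ≤ η * V x ^ (η - 1) :=
    mul_nonneg hη0 (Real.rpow_pos_of_pos hVx _).le
  have hnn3 : (0:ℝ) ≤ η * c * V x ^ (η - α) :=
    mul_nonneg (mul_nonneg hη0 hc.le) (Real.rpow_pos_of_pos hVx _).le
  -- integrate the tangent line bound
  have hint : (∫⁻ y, ENNReal.ofReal (V y ^ η) ∂(P θ x)) ≤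
      ENNReal.ofReal ((1 - η) * V x ^ η) +
        ENNReal.ofReal (η * V x ^ (η - 1)) * ∫⁻ y, ENNReal.ofReal (V y) ∂(P θ x) := by
    have step1 : (∫⁻ y, ENNReal.ofReal (V y ^ η) ∂(P θ x)) ≤
        ∫⁻ y, (ENNReal.ofReal ((1 - η) * V x ^ η) +
          ENNReal.ofReal (η * V x ^ (η - 1)) * ENNReal.ofReal (V y)) ∂(P θ x) := by
      refine lintegral_mono fun y => ?_
      have hy0 : (0 : ℝ) ≤ V y := le_trans zero_le_one (hV1 y)
      rw [← ENNReal.ofReal_mul hnn2, ← ENNReal.ofReal_add hnn1 (mul_nonneg hnn2 hy0)]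
      exact ENNReal.ofReal_le_ofReal (htang y)
    refine le_trans step1 ?_
    rw [lintegral_add_left measurable_const, lintegral_const_mul _ hVmeas.ennreal_ofReal,
      lintegral_const, measure_univ, mul_one]
  -- use the drift hypothesis
  have hint2 : (∫⁻ y, ENNReal.ofReal (V y ^ η) ∂(P θ x)) ≤
      ENNReal.ofReal ((1 - η) * V x ^ η + η * V x ^ (η - 1) * R) := by
    refine le_trans hint ?_
    rw [ENNReal.ofReal_add hnn1 (mul_nonneg hnn2 hR0),
      ENNReal.ofReal_mul (p := η * V x ^ (η - 1)) hnn2]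
    exact add_le_add_right (mul_le_mul_right (hdrift θ x) _) _
  -- real comparison
  have hreal : (1 - η) * V x ^ η + η * V x ^ (η - 1) * R + η * c * V x ^ (η - α) ≤
      V x ^ η + b * I := by
    have e1 : V x ^ (η - 1) * V x = V x ^ η := by
      rw [Real.rpow_sub hVx, Real.rpow_one, div_mul_cancel₀ _ hVx.ne']
    have e2 : V x ^ (η - 1) * V x ^ (1 - α) = V x ^ (η - α) := by
      rw [← Real.rpow_add hVx]
      congr 1
      ring
    have e3 : η * V x ^ (η - 1) ≤ 1 := by
      have h1 : V x ^ (η - 1) ≤ 1 :=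
        Real.rpow_le_one_of_one_le_of_nonpos (hV1 x) (by linarith)
      have h2 : 0 ≤ V x ^ (η - 1) := (Real.rpow_pos_of_pos hVx _).le
      nlinarith
    have expand : (1 - η) * V x ^ η + η * V x ^ (η - 1) * R + η * c * V x ^ (η - α) =
        V x ^ η + (η * V x ^ (η - 1)) * (b * I) := by
      rw [hRdef]
      linear_combination η * e1 - η * c * e2
    rw [expand]
    have hfin : (η * V x ^ (η - 1)) * (b * I) ≤ 1 * (b * I) :=
      mul_le_mul_of_nonneg_right e3 (by positivity)
    rw [one_mul] at hfin
    linarith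
  -- combine in ℝ≥0∞
  calc (∫⁻ y, ENNReal.ofReal (V y ^ η) ∂(P θ x)) + ENNReal.ofReal (η * c * V x ^ (η - α))
      ≤ ENNReal.ofReal ((1 - η) * V x ^ η + η * V x ^ (η - 1) * R) +
          ENNReal.ofReal (η * c * V x ^ (η - α)) := add_le_add_left hint2 _
    _ = ENNReal.ofReal ((1 - η) * V x ^ η + η * V x ^ (η - 1) * R + η * c * V x ^ (η - α)) := by
        rw [← ENNReal.ofReal_add (add_nonneg hnn1 (mul_nonneg hnn2 hR0)) hnn3]
    _ ≤ ENNReal.ofReal (V x ^ η + b * I) := ENNReal.ofReal_le_ofReal hreal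
    _ = ENNReal.ofReal (V x ^ η) + ENNReal.ofReal b * (C.indicator (fun _ => (1 : ℝ≥0∞)) x) := by
        rw [hIdef, Set.indicator_apply, Set.indicator_apply]
        by_cases hx : x ∈ C
        · rw [if_pos hx, if_pos hx, mul_one, mul_one,
            ENNReal.ofReal_add (Real.rpow_pos_of_pos hVx η).le hb.le]
        · rw [if_neg hx, if_neg hx, mul_zero, mul_zero, add_zero, add_zero]

end AdaptiveMCMC
namespace AdaptiveMCMC

/-- Proposition 4.5(iii): discounted modulated moment bound under the drift condition. -/
theorem discounted_moment_bound
    {X Θ : Type*} [MeasurableSpace X] [MeasurableSpace Θ]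
    (P : Θ → Kernel X X) (hPm : ∀ θ, IsMarkovKernel (P θ))
    (hPθmeas : ∀ (x : X) (A : Set X), MeasurableSet A → Measurable fun θ => P θ x A)
    (Pbar : ℕ → Kernel (X × Θ) (X × Θ)) (hPbarm : ∀ n, IsMarkovKernel (Pbar n))
    (hcompat : Compat P Pbar)
    (law : ℕ → X × Θ → Measure (ℕ → X × Θ)) (hlaw : IsAdaptiveLaw Pbar law)
    (V : X → ℝ) (hVmeas : Measurable V) (hV1 : ∀ x, 1 ≤ V x)
    (C : Set X) (hCmeas : MeasurableSet C)
    (α b c : ℝ) (hα0 : 0 < α) (hα1 : α ≤ 1) (hb : 0 < b) (hc : 0 < c)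
    (hdrift : ∀ (θ : Θ) (x : X),
        (∫⁻ y, ENNReal.ofReal (V y) ∂(P θ x)) ≤
          ENNReal.ofReal (V x - c * V x ^ (1 - α) + b * C.indicator (fun _ => (1 : ℝ)) x)) :
    ∃ bb : ℝ, ∀ (β a : ℝ), 0 ≤ β → β ≤ 1 - α → 0 < a → a < 1 →
      ∀ q : ℝ≥0∞, 1 ≤ q →
      ∀ (l : ℕ) (x : X) (θ : Θ) (τ : (ℕ → X × Θ) → ℕ∞), IsPathStoppingTime τ →
      (∫⁻ ω, ∑' j : ℕ, (if (j : ℕ∞) < τ ω then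
          ENNReal.ofReal ((1 - a) ^ j * V ((ω j).1) ^ β) else 0) ∂(law l (x, θ))) ≤
        ENNReal.ofReal (a ^ ((q⁻¹).toReal - 1) * (1 - a) ^ (-(q⁻¹).toReal) *
            (α * c) ^ (-(q⁻¹).toReal) * V x ^ (β + α * (q⁻¹).toReal)) *
          (1 + ENNReal.ofReal bb *
            ∫⁻ ω, ∑' j : ℕ, (if (j : ℕ∞) < τ ω ∧ (ω j).1 ∈ C then
              ENNReal.ofReal ((1 - a) ^ j) else 0) ∂(law l (x, θ))) := by
  classical
  refine ⟨b, ?_⟩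
  intro β a hβ0 hβ1 ha0 ha1 q hq l x θ τ hτ
  have h1a : (0:ℝ) < 1 - a := by linarith
  set s : ℝ := (q⁻¹).toReal with hsdef
  have hs0 : (0:ℝ) ≤ s := ENNReal.toReal_nonneg
  have hs1 : s ≤ 1 := by
    have hinv : q⁻¹ ≤ (1 : ℝ≥0∞) := ENNReal.inv_le_one.mpr hq
    have h2 : (q⁻¹).toReal ≤ (1 : ℝ≥0∞).toReal :=
      ENNReal.toReal_mono ENNReal.one_ne_top hinv
    rw [ENNReal.toReal_one] at h2
    exact h2
  set η : ℝ := β + α * s with hηdef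
  have hη0 : (0:ℝ) ≤ η := add_nonneg hβ0 (mul_nonneg hα0.le hs0)
  have hη1 : η ≤ 1 := by
    have hαs : α * s ≤ α := by nlinarith
    linarith
  have hαc : (0:ℝ) < α * c := mul_pos hα0 hc
  set A : ℝ := a ^ (s - 1) * (1 - a) ^ (-s) * (α * c) ^ (-s) with hAdef
  have hA0 : (0:ℝ) < A :=
    mul_pos (mul_pos (Real.rpow_pos_of_pos ha0 _) (Real.rpow_pos_of_pos h1a _))
      (Real.rpow_pos_of_pos hαc _)
  set W : X → ℝ≥0∞ := fun y => ENNReal.ofReal (V y ^ η) with hWdef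
  set g' : X → ℝ≥0∞ := fun y => ENNReal.ofReal (η * c * V y ^ (η - α)) with hgdef
  have hWm : Measurable W := by
    rw [hWdef]; fun_prop
  have hgm : Measurable g' := by
    rw [hgdef]; fun_prop
  set a' : ℝ≥0∞ := ENNReal.ofReal (1 - a) with ha'def
  have ha'le : a' ≤ 1 := ENNReal.ofReal_le_one.mpr (by linarith)
  have h1a' : (1 : ℝ≥0∞) - a' = ENNReal.ofReal a := by
    rw [ha'def, show (1 : ℝ≥0∞) = ENNReal.ofReal 1 from ENNReal.ofReal_one.symm,
      ← ENNReal.ofReal_sub 1 (by linarith : (0:ℝ) ≤ 1 - a)]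
    congr 1
    ring
  have hpow : ∀ j : ℕ, a' ^ j = ENNReal.ofReal ((1 - a) ^ j) := fun j => by
    rw [ha'def, ← ENNReal.ofReal_pow (by linarith : (0:ℝ) ≤ 1 - a)]
  have hdrift' : ∀ (θ' : Θ) (x' : X),
      (∫⁻ y, W y ∂(P θ' x')) + g' x' ≤
        W x' + ENNReal.ofReal b * (C.indicator (fun _ => (1 : ℝ≥0∞)) x') :=
    fun θ' x' => derived_drift hPm hVmeas hV1 hα0 hα1 hb hc hdrift hη0 hη1 θ' x'
  have hcore := core_comparison hPbarm hcompat hlaw hCmeas hWm hgm (ENNReal.ofReal b)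
    ha'le hdrift'
  -- measurability of the various integrands
  have hcoord : ∀ j : ℕ, Measurable fun ω : ℕ → X × Θ => (ω j).1 :=
    fun j => measurable_fst.comp (measurable_pi_apply j)
  have htermm : ∀ j : ℕ, Measurable fun ω : ℕ → X × Θ =>
      (if (j : ℕ∞) < τ ω then ENNReal.ofReal ((1 - a) ^ j * V ((ω j).1) ^ β) else 0) := by
    intro j
    refine Measurable.ite (measurableSet_lt_stop hτ j) ?_ measurable_const
    have hV' : Measurable fun ω : ℕ → X × Θ => V ((ω j).1) := hVmeas.comp (hcoord j)
    fun_prop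
  have hSmf : ∀ j : ℕ, Measurable fun ω : ℕ → X × Θ =>
      (if (j : ℕ∞) < τ ω then a' ^ j * ((1 - a') * W ((ω j).1) + a' * g' ((ω j).1)) else 0) := by
    intro j
    refine Measurable.ite (measurableSet_lt_stop hτ j) ?_ measurable_const
    exact measurable_const.mul
      ((measurable_const.mul (hWm.comp (hcoord j))).add
        (measurable_const.mul (hgm.comp (hcoord j))))
  have hTmf : ∀ j : ℕ, Measurable fun ω : ℕ → X × Θ =>
      (if (j : ℕ∞) < τ ω ∧ (ω j).1 ∈ C then ENNReal.ofReal ((1 - a) ^ j) else 0) := by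
    intro j
    refine Measurable.ite ?_ measurable_const measurable_const
    have hs' : {ω : ℕ → X × Θ | (j : ℕ∞) < τ ω ∧ (ω j).1 ∈ C} =
        {ω : ℕ → X × Θ | (j : ℕ∞) < τ ω} ∩ ((fun ω : ℕ → X × Θ => (ω j).1) ⁻¹' C) := rfl
    rw [hs']
    exact (measurableSet_lt_stop hτ j).inter ((hcoord j) hCmeas)
  -- pointwise Young bound
  have hpt : ∀ (j : ℕ) (ω : ℕ → X × Θ),
      (if (j : ℕ∞) < τ ω then ENNReal.ofReal ((1 - a) ^ j * V ((ω j).1) ^ β) else 0) ≤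
        ENNReal.ofReal A *
          (if (j : ℕ∞) < τ ω then
            a' ^ j * ((1 - a') * W ((ω j).1) + a' * g' ((ω j).1)) else 0) := by
    intro j ω
    by_cases hcase : (j : ℕ∞) < τ ω
    · rw [if_pos hcase, if_pos hcase]
      have hv1 : (1:ℝ) ≤ V ((ω j).1) := hV1 _
      have hv0 : (0:ℝ) < V ((ω j).1) := lt_of_lt_of_le one_pos hv1
      have hRHS : ENNReal.ofReal A *
          (a' ^ j * ((1 - a') * W ((ω j).1) + a' * g' ((ω j).1))) =
          ENNReal.ofReal (A * ((1 - a) ^ j *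
            (a * V ((ω j).1) ^ η + (1 - a) * (η * c * V ((ω j).1) ^ (η - α))))) := by
        rw [h1a', hpow j, hWdef, hgdef]
        simp only []
        rw [← ENNReal.ofReal_mul ha0.le, ← ENNReal.ofReal_mul h1a.le,
          ← ENNReal.ofReal_add (by positivity)
            (mul_nonneg h1a.le (mul_nonneg (mul_nonneg hη0 hc.le)
              (Real.rpow_pos_of_pos hv0 _).le)),
          ← ENNReal.ofReal_mul (pow_nonneg h1a.le j), ← ENNReal.ofReal_mul hA0.le]
      rw [hRHS]
      refine ENNReal.ofReal_le_ofReal ?_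
      have hy := young_bound ha0 ha1 hα0 hc hβ0 hs0 hs1 hv1
      calc (1 - a) ^ j * V ((ω j).1) ^ β
          ≤ (1 - a) ^ j * ((a ^ (s - 1) * (1 - a) ^ (-s) * (α * c) ^ (-s)) *
              (a * V ((ω j).1) ^ (β + α * s) +
                (1 - a) * ((β + α * s) * c) * V ((ω j).1) ^ (β + α * s - α))) :=
            mul_le_mul_of_nonneg_left hy (pow_nonneg h1a.le j)
        _ = A * ((1 - a) ^ j *
            (a * V ((ω j).1) ^ η + (1 - a) * (η * c * V ((ω j).1) ^ (η - α)))) := by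
            rw [hAdef, hηdef]
            ring
    · rw [if_neg hcase, if_neg hcase, mul_zero]
  -- sum of T-integrals equals the integral appearing in the statement
  have hTsum : (∑' j : ℕ, ∫⁻ ω,
      (if (j : ℕ∞) < τ ω ∧ (ω j).1 ∈ C then a' ^ j else 0) ∂(law l (x, θ))) =
      ∫⁻ ω, ∑' j : ℕ, (if (j : ℕ∞) < τ ω ∧ (ω j).1 ∈ C then
        ENNReal.ofReal ((1 - a) ^ j) else 0) ∂(law l (x, θ)) := by
    rw [lintegral_tsum fun j => (hTmf j).aemeasurable]
    refine tsum_congr fun j => ?_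
    refine lintegral_congr fun ω => ?_
    rw [hpow j]
  have hsum : (∑' j : ℕ, ∫⁻ ω,
      (if (j : ℕ∞) < τ ω then a' ^ j * ((1 - a') * W ((ω j).1) + a' * g' ((ω j).1)) else 0)
      ∂(law l (x, θ))) ≤
      W x + ENNReal.ofReal b * ∑' j : ℕ, ∫⁻ ω,
        (if (j : ℕ∞) < τ ω ∧ (ω j).1 ∈ C then a' ^ j else 0) ∂(law l (x, θ)) := by
    rw [ENNReal.tsum_eq_iSup_nat]
    refine iSup_le fun n => (hcore n l (x, θ) τ hτ).trans ?_
    exact add_le_add_right (mul_le_mul_right (ENNReal.sum_le_tsum _) _) _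
  -- final assembly
  calc (∫⁻ ω, ∑' j : ℕ, (if (j : ℕ∞) < τ ω then
          ENNReal.ofReal ((1 - a) ^ j * V ((ω j).1) ^ β) else 0) ∂(law l (x, θ)))
      = ∑' j : ℕ, ∫⁻ ω, (if (j : ℕ∞) < τ ω then
          ENNReal.ofReal ((1 - a) ^ j * V ((ω j).1) ^ β) else 0) ∂(law l (x, θ)) :=
        lintegral_tsum fun j => (htermm j).aemeasurable
    _ ≤ ∑' j : ℕ, ENNReal.ofReal A * ∫⁻ ω, (if (j : ℕ∞) < τ ω then
          a' ^ j * ((1 - a') * W ((ω j).1) + a' * g' ((ω j).1)) else 0) ∂(law l (x, θ)) := by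
        refine ENNReal.tsum_le_tsum fun j => ?_
        rw [← lintegral_const_mul _ (hSmf j)]
        exact lintegral_mono (hpt j)
    _ = ENNReal.ofReal A * ∑' j : ℕ, ∫⁻ ω, (if (j : ℕ∞) < τ ω then
          a' ^ j * ((1 - a') * W ((ω j).1) + a' * g' ((ω j).1)) else 0) ∂(law l (x, θ)) :=
        ENNReal.tsum_mul_left
    _ ≤ ENNReal.ofReal A * (W x + ENNReal.ofReal b * ∑' j : ℕ, ∫⁻ ω,
          (if (j : ℕ∞) < τ ω ∧ (ω j).1 ∈ C then a' ^ j else 0) ∂(law l (x, θ))) :=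
        mul_le_mul_right hsum _
    _ ≤ ENNReal.ofReal (A * V x ^ η) * (1 + ENNReal.ofReal b * ∑' j : ℕ, ∫⁻ ω,
          (if (j : ℕ∞) < τ ω ∧ (ω j).1 ∈ C then a' ^ j else 0) ∂(law l (x, θ))) := by
        have hAx : ENNReal.ofReal A ≤ ENNReal.ofReal (A * V x ^ η) :=
          ENNReal.ofReal_le_ofReal
            (le_mul_of_one_le_right hA0.le (Real.one_le_rpow (hV1 x) hη0))
        have e1 : ENNReal.ofReal A * W x = ENNReal.ofReal (A * V x ^ η) := by
          rw [hWdef]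
          exact (ENNReal.ofReal_mul hA0.le).symm
        rw [mul_add, mul_add, mul_one, e1]
        exact add_le_add_right (mul_le_mul_left hAx _) _
    _ = ENNReal.ofReal (A * V x ^ η) * (1 + ENNReal.ofReal b * ∫⁻ ω, ∑' j : ℕ,
          (if (j : ℕ∞) < τ ω ∧ (ω j).1 ∈ C then ENNReal.ofReal ((1 - a) ^ j) else 0)
          ∂(law l (x, θ))) := by
        rw [hTsum]

end AdaptiveMCMC
end
end

section
/- Assume the drift condition: there exist a measurable V : X → [1,∞), a measurable set C ⊆ X, constants b, c > 0 and 0 < α ≤ 1 such that P_θV ≤ V − c V^{1−α} + b·1_C for every θ ∈ Θ. Let π be a probability measure on X, 0 ≤ β ≤ 1 − α, and f a measurable function with sup_X |f|/V^β < ∞ and π(|f|) < ∞; set f̄ := f − π(f). For 0 < a < 1 and l ≥ 0 define ĝ_a^{(l)}(x,θ) := Σ_{j ≥ 0} (1−a)^{j+1} E^{(l)}_{x,θ}[f̄(X_j)]. Then the series defining ĝ_a^{(l)}(x,θ) converges absolutely for every (x,θ), l and 0 < a < 1, and f̄(x) = (1−a)^{-1} ĝ_a^{(l)}(x,θ) −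 E^{(l)}_{x,θ}[ ĝ_a^{(l+1)}(X_1, θ_1) ]. -/
open MeasureTheory ProbabilityTheory Filter Set
open scoped ENNReal NNReal Classical

noncomputable section

namespace AdaptiveMCMC

variable {X Θ : Type*} [MeasurableSpace X] [MeasurableSpace Θ]

/-- The resolvent function
`ĝ_a^{(l)}(x,θ) = Σ_{j≥0} (1−a)^{j+1} E^{(l)}_{x,θ}[f(X_j) − π(f)]`. -/
def ghat (law : ℕ → X × Θ → Measure (ℕ → X × Θ)) (π : Measure X) (f : X → ℝ)
    (a : ℝ) (l : ℕ) (z : X × Θ) : ℝ :=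
  ∑' j : ℕ, (1 - a) ^ (j + 1) * ∫ ω, (f ((ω j).1) - ∫ y, f y ∂π) ∂(law l z)

end AdaptiveMCMC

namespace AdaptiveMCMC


section Aux

variable {X Θ : Type*} [MeasurableSpace X] [MeasurableSpace Θ]

lemma measurable_prepend_s14 {α : Type*} [MeasurableSpace α] (z : α) :
    Measurable (prepend z : (ℕ → α) → ℕ → α) :=
  measurable_pi_lambda _ fun n => by
    cases n with
    | zero => exact measurable_const
    | succ n => exact measurable_pi_apply n

lemma map_bind_meas {α β γ : Type*} [MeasurableSpace α] [MeasurableSpace β] [MeasurableSpace γ]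
    (m : Measure α) (f : α → Measure β) (hf : Measurable f) (g : β → γ) (hg : Measurable g) :
    (m.bind f).map g = m.bind (fun a => (f a).map g) := by
  have h2 : Measurable fun a => (f a).map g := (Measure.measurable_map g hg).comp hf
  ext s hs
  rw [Measure.map_apply hg hs, Measure.bind_apply (hg hs) hf.aemeasurable, Measure.bind_apply hs h2.aemeasurable]
  exact lintegral_congr fun a => (Measure.map_apply hg hs).symm

lemma bind_const_prob {α β : Type*} [MeasurableSpace α] [MeasurableSpace β]
    (m : Measure α) [IsProbabilityMeasure m] (μ : Measure β) : m.bind (fun _ => μ) = μ := by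
  ext s hs
  rw [Measure.bind_apply hs measurable_const.aemeasurable]
  simp

lemma integral_bind_kernel {α β : Type*} [MeasurableSpace α] [MeasurableSpace β]
    (μ : Measure α) [IsProbabilityMeasure μ] (κ : Kernel α β) [IsMarkovKernel κ]
    (g : β → ℝ) (hg : Measurable g)
    (hint : Integrable (fun p : α × β => g p.2) (μ ⊗ₘ κ)) :
    ∫ y, g y ∂(μ.bind κ) = ∫ a, ∫ y, g y ∂(κ a) ∂μ := by
  have hbind : μ.bind κ = (μ ⊗ₘ κ).map Prod.snd := by
    ext s hs
    rw [Measure.map_apply measurable_snd hs, Measure.bind_apply hs κ.measurable.aemeasurable,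
      Measure.compProd_apply (measurable_snd hs)]
    rfl
  rw [hbind, integral_map measurable_snd.aemeasurable hg.aestronglyMeasurable,
    Measure.integral_compProd hint]

variable {Pbar : ℕ → Kernel (X × Θ) (X × Θ)} {law : ℕ → X × Θ → Measure (ℕ → X × Θ)}

lemma marginal_zero (hPbarm : ∀ n, IsMarkovKernel (Pbar n)) (hlaw : IsAdaptiveLaw Pbar law)
    (l : ℕ) (z : X × Θ) :
    (law l z).map (fun ω => ω 0) = Measure.dirac z := by
  have := hPbarm l
  have hmf : Measurable fun z' => (law (l + 1) z').map (prepend z) :=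
    (Measure.measurable_map _ (measurable_prepend_s14 z)).comp (hlaw.meas (l + 1))
  rw [hlaw.step l z, map_bind_meas _ _ hmf _ (measurable_pi_apply 0)]
  have h1 : ∀ z' : X × Θ, ((law (l + 1) z').map (prepend z)).map (fun ω => ω 0)
      = Measure.dirac z := by
    intro z'
    have := hlaw.prob (l + 1) z'
    rw [Measure.map_map (measurable_pi_apply 0) (measurable_prepend_s14 z)]
    have h : ((fun ω : ℕ → X × Θ => ω 0) ∘ prepend z) = fun _ => z := rfl
    rw [h, Measure.map_const]
    simp
  rw [funext h1, bind_const_prob]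

lemma marginal_succ (hPbarm : ∀ n, IsMarkovKernel (Pbar n)) (hlaw : IsAdaptiveLaw Pbar law)
    (l j : ℕ) (z : X × Θ) :
    (law l z).map (fun ω => ω (j + 1)) =
      (Pbar l z).bind (fun z' => (law (l + 1) z').map (fun ω => ω j)) := by
  have hmf : Measurable fun z' => (law (l + 1) z').map (prepend z) :=
    (Measure.measurable_map _ (measurable_prepend_s14 z)).comp (hlaw.meas (l + 1))
  rw [hlaw.step l z, map_bind_meas _ _ hmf _ (measurable_pi_apply (j + 1))]
  congr 1
  funext z'
  rw [Measure.map_map (measurable_pi_apply (j + 1)) (measurable_prepend_s14 z)]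
  rfl

lemma marginal_one (hPbarm : ∀ n, IsMarkovKernel (Pbar n)) (hlaw : IsAdaptiveLaw Pbar law)
    (l : ℕ) (z : X × Θ) :
    (law l z).map (fun ω => ω 1) = Pbar l z := by
  rw [marginal_succ hPbarm hlaw l 0 z]
  have h1 : (fun z' : X × Θ => (law (l + 1) z').map (fun ω => ω 0)) = Measure.dirac := by
    funext z'
    exact marginal_zero hPbarm hlaw (l + 1) z'
  rw [h1, Measure.bind_dirac]

end Aux


section Aux2

variable {X Θ : Type*} [MeasurableSpace X] [MeasurableSpace Θ]
variable {P : Θ → Kernel X X} {Pbar : ℕ → Kernel (X × Θ) (X × Θ)}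
variable {law : ℕ → X × Θ → Measure (ℕ → X × Θ)}

lemma fst_Pbar (hcompat : Compat P Pbar) (n : ℕ) (x : X) (θ : Θ) :
    (Pbar n (x, θ)).map Prod.fst = P θ x := by
  ext A hA
  rw [Measure.map_apply measurable_fst hA, ← hcompat n x θ A hA]
  congr 1
  exact (Set.prod_univ).symm

lemma lintegral_V_Pbar (hcompat : Compat P Pbar)
    {V : X → ℝ} (hVmeas : Measurable V) (hV1 : ∀ x, 1 ≤ V x)
    {C : Set X} {α b c : ℝ} (hα1 : α ≤ 1) (hb : 0 < b) (hc : 0 < c)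
    (hdrift : ∀ (θ : Θ) (x : X),
        (∫⁻ y, ENNReal.ofReal (V y) ∂(P θ x)) ≤
          ENNReal.ofReal (V x - c * V x ^ (1 - α) + b * C.indicator (fun _ => (1 : ℝ)) x))
    (n : ℕ) (x : X) (θ : Θ) :
    ∫⁻ z', ENNReal.ofReal (V z'.1) ∂(Pbar n (x, θ)) ≤
      ENNReal.ofReal (V x) + ENNReal.ofReal b := by
  have h1 : ∫⁻ z', ENNReal.ofReal (V z'.1) ∂(Pbar n (x, θ))
      = ∫⁻ y, ENNReal.ofReal (V y) ∂((Pbar n (x, θ)).map Prod.fst) := by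
    rw [lintegral_map (hVmeas.ennreal_ofReal) measurable_fst]
  rw [h1, fst_Pbar hcompat]
  refine (hdrift θ x).trans ?_
  have h2 : V x - c * V x ^ (1 - α) + b * C.indicator (fun _ => (1 : ℝ)) x ≤ V x + b := by
    have h3 : 0 ≤ c * V x ^ (1 - α) :=
      mul_nonneg hc.le (Real.rpow_nonneg (by linarith [hV1 x]) _)
    have h4 : C.indicator (fun _ => (1 : ℝ)) x ≤ 1 := by
      classical
      by_cases hx : x ∈ C <;> simp [Set.indicator, hx]
    nlinarith
  exact (ENNReal.ofReal_le_ofReal h2).trans (ENNReal.ofReal_add_le)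

lemma lintegral_V_law (hPbarm : ∀ n, IsMarkovKernel (Pbar n)) (hlaw : IsAdaptiveLaw Pbar law)
    (hcompat : Compat P Pbar)
    {V : X → ℝ} (hVmeas : Measurable V) (hV1 : ∀ x, 1 ≤ V x)
    {C : Set X} {α b c : ℝ} (hα1 : α ≤ 1) (hb : 0 < b) (hc : 0 < c)
    (hdrift : ∀ (θ : Θ) (x : X),
        (∫⁻ y, ENNReal.ofReal (V y) ∂(P θ x)) ≤
          ENNReal.ofReal (V x - c * V x ^ (1 - α) + b * C.indicator (fun _ => (1 : ℝ)) x))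
    (j : ℕ) :
    ∀ (l : ℕ) (z : X × Θ),
      ∫⁻ ω, ENNReal.ofReal (V ((ω j).1)) ∂(law l z) ≤
        ENNReal.ofReal (V z.1) + j * ENNReal.ofReal b := by
  have hW : Measurable fun w : X × Θ => ENNReal.ofReal (V w.1) :=
    (hVmeas.comp measurable_fst).ennreal_ofReal
  induction j with
  | zero =>
    intro l z
    have h1 : ∫⁻ ω, ENNReal.ofReal (V ((ω 0).1)) ∂(law l z)
        = ∫⁻ w, ENNReal.ofReal (V w.1) ∂((law l z).map (fun ω => ω 0)) :=
      (lintegral_map hW (measurable_pi_apply 0)).symm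
    rw [h1, marginal_zero hPbarm hlaw l z, lintegral_dirac' _ hW]
    simp
  | succ j ih =>
    intro l z
    obtain ⟨x, θ⟩ := z
    have := hPbarm l
    have hmf : Measurable fun z' : X × Θ => (law (l + 1) z').map (fun ω => ω j) :=
      (Measure.measurable_map _ (measurable_pi_apply j)).comp (hlaw.meas (l + 1))
    have h1 : ∫⁻ ω, ENNReal.ofReal (V ((ω (j + 1)).1)) ∂(law l (x, θ))
        = ∫⁻ w, ENNReal.ofReal (V w.1) ∂((law l (x, θ)).map (fun ω => ω (j + 1))) :=
      (lintegral_map hW (measurable_pi_apply (j + 1))).symm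
    rw [h1, marginal_succ hPbarm hlaw l j (x, θ), Measure.lintegral_bind hmf.aemeasurable hW.aemeasurable]
    have h2 : ∀ z' : X × Θ, ∫⁻ w, ENNReal.ofReal (V w.1) ∂((law (l + 1) z').map (fun ω => ω j))
        ≤ ENNReal.ofReal (V z'.1) + j * ENNReal.ofReal b := by
      intro z'
      rw [lintegral_map hW (measurable_pi_apply j)]
      exact ih (l + 1) z'
    calc ∫⁻ z', (∫⁻ w, ENNReal.ofReal (V w.1) ∂((law (l + 1) z').map (fun ω => ω j)))
          ∂(Pbar l (x, θ))
        ≤ ∫⁻ z', (ENNReal.ofReal (V z'.1) + j * ENNReal.ofReal b) ∂(Pbar l (x, θ)) :=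
          lintegral_mono h2
      _ = (∫⁻ z', ENNReal.ofReal (V z'.1) ∂(Pbar l (x, θ))) + j * ENNReal.ofReal b := by
          rw [lintegral_add_right _ measurable_const, lintegral_const]
          simp
      _ ≤ ENNReal.ofReal (V x) + ENNReal.ofReal b + j * ENNReal.ofReal b :=
          add_le_add_left (lintegral_V_Pbar hcompat hVmeas hV1 hα1 hb hc hdrift l x θ) _
      _ = ENNReal.ofReal (V (x, θ).1) + (j + 1 : ℕ) * ENNReal.ofReal b := by push_cast; ring

end Aux2


section Aux3

variable {X Θ : Type*} [MeasurableSpace X] [MeasurableSpace Θ]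
variable {P : Θ → Kernel X X} {Pbar : ℕ → Kernel (X × Θ) (X × Θ)}
variable {law : ℕ → X × Θ → Measure (ℕ → X × Θ)}
variable {V : X → ℝ} {C : Set X} {α b c : ℝ} {π : Measure X} {f : X → ℝ} {Mf β : ℝ}

/-- The `j`-th coefficient of the resolvent series. -/
def cfun (law : ℕ → X × Θ → Measure (ℕ → X × Θ)) (π : Measure X) (f : X → ℝ)
    (j l : ℕ) (z : X × Θ) : ℝ :=
  ∫ ω, (f ((ω j).1) - ∫ y, f y ∂π) ∂(law l z)

lemma Mf_nonneg (hV1 : ∀ x, 1 ≤ V x) (hfb : ∀ x, |f x| ≤ Mf * V x ^ β) (y : X) : 0 ≤ Mf := by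
  have h := hfb y
  have hv : 0 < V y ^ β := Real.rpow_pos_of_pos (by linarith [hV1 y]) β
  nlinarith [abs_nonneg (f y)]

lemma norm_term_le (hV1 : ∀ x, 1 ≤ V x) (hβ1 : β ≤ 1)
    (hfb : ∀ x, |f x| ≤ Mf * V x ^ β) (y : X) :
    ‖f y - ∫ u, f u ∂π‖ ≤ Mf * V y + |∫ u, f u ∂π| := by
  have hMf : 0 ≤ Mf := Mf_nonneg hV1 hfb y
  have h1 : V y ^ β ≤ V y := by
    have := Real.rpow_le_rpow_of_exponent_le (hV1 y) hβ1
    rwa [Real.rpow_one] at this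
  have h2 : |f y| ≤ Mf * V y := (hfb y).trans (by nlinarith)
  calc ‖f y - ∫ u, f u ∂π‖ ≤ |f y| + |∫ u, f u ∂π| := abs_sub _ _
    _ ≤ Mf * V y + |∫ u, f u ∂π| := by linarith

lemma measurable_cfun (hlaw : IsAdaptiveLaw Pbar law) (hfmeas : Measurable f) (j l : ℕ) :
    Measurable fun z => cfun law π f j l z := by
  let κ : Kernel (X × Θ) (ℕ → X × Θ) := ⟨law l, hlaw.meas l⟩
  have : IsMarkovKernel κ := ⟨fun z => hlaw.prob l z⟩
  have hg : StronglyMeasurable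
      fun p : (X × Θ) × (ℕ → X × Θ) => (f ((p.2 j).1) - ∫ y, f y ∂π) :=
    ((hfmeas.comp (measurable_fst.comp ((measurable_pi_apply j).comp
      measurable_snd))).sub measurable_const).stronglyMeasurable
  exact (hg.integral_kernel_prod_right' (κ := κ)).measurable

section Bounds

variable (hPbarm : ∀ n, IsMarkovKernel (Pbar n)) (hlaw : IsAdaptiveLaw Pbar law)
  (hcompat : Compat P Pbar)
  (hVmeas : Measurable V) (hV1 : ∀ x, 1 ≤ V x)
  (hα1 : α ≤ 1) (hb : 0 < b) (hc : 0 < c)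
  (hdrift : ∀ (θ : Θ) (x : X),
      (∫⁻ y, ENNReal.ofReal (V y) ∂(P θ x)) ≤
        ENNReal.ofReal (V x - c * V x ^ (1 - α) + b * C.indicator (fun _ => (1 : ℝ)) x))

include hPbarm hlaw hcompat hVmeas hV1 hα1 hb hc hdrift

lemma lintegral_bound_law {G : (ℕ → X × Θ) → ℝ≥0∞} {K₁ K₂ : ℝ}
    (hK₁ : 0 ≤ K₁) (hK₂ : 0 ≤ K₂) (j l : ℕ) (z : X × Θ)
    (hG : ∀ ω, G ω ≤ ENNReal.ofReal (K₁ * V ((ω j).1) + K₂)) :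
    ∫⁻ ω, G ω ∂(law l z) ≤ ENNReal.ofReal (K₁ * V z.1 + K₁ * (j * b) + K₂) := by
  have := hlaw.prob l z
  have hW : Measurable fun ω : ℕ → X × Θ => ENNReal.ofReal (V ((ω j).1)) :=
    (hVmeas.comp (measurable_fst.comp (measurable_pi_apply j))).ennreal_ofReal
  calc ∫⁻ ω, G ω ∂(law l z)
      ≤ ∫⁻ ω, ENNReal.ofReal (K₁ * V ((ω j).1) + K₂) ∂(law l z) := lintegral_mono hG
    _ = ∫⁻ ω, (ENNReal.ofReal K₁ * ENNReal.ofReal (V ((ω j).1)) + ENNReal.ofReal K₂)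
          ∂(law l z) := by
        refine lintegral_congr fun ω => ?_
        rw [ENNReal.ofReal_add (mul_nonneg hK₁ (by linarith [hV1 ((ω j).1)])) hK₂,
          ENNReal.ofReal_mul hK₁]
    _ = ENNReal.ofReal K₁ * (∫⁻ ω, ENNReal.ofReal (V ((ω j).1)) ∂(law l z))
          + ENNReal.ofReal K₂ := by
        rw [lintegral_add_right _ measurable_const, lintegral_const_mul _ hW, lintegral_const]
        simp
    _ ≤ ENNReal.ofReal K₁ * (ENNReal.ofReal (V z.1) + j * ENNReal.ofReal b)
          + ENNReal.ofReal K₂ := by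
        gcongr
        exact lintegral_V_law hPbarm hlaw hcompat hVmeas hV1 hα1 hb hc hdrift j l z
    _ = ENNReal.ofReal (K₁ * V z.1 + K₁ * (j * b) + K₂) := by
        rw [show (j : ℝ≥0∞) * ENNReal.ofReal b = ENNReal.ofReal (j * b) by
            rw [ENNReal.ofReal_mul (by positivity), ENNReal.ofReal_natCast],
          ← ENNReal.ofReal_add (by linarith [hV1 z.1]) (by positivity),
          ← ENNReal.ofReal_mul hK₁, mul_add,
          ← ENNReal.ofReal_add (by
            have h0 : 0 ≤ K₁ * ((j : ℝ) * b) := mul_nonneg hK₁ (by positivity)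
            nlinarith [hV1 z.1]) hK₂]

lemma lintegral_bound_Pbar {G : X × Θ → ℝ≥0∞} {K₁ K₂ : ℝ}
    (hK₁ : 0 ≤ K₁) (hK₂ : 0 ≤ K₂) (n : ℕ) (x : X) (θ : Θ)
    (hG : ∀ z', G z' ≤ ENNReal.ofReal (K₁ * V z'.1 + K₂)) :
    ∫⁻ z', G z' ∂(Pbar n (x, θ)) ≤ ENNReal.ofReal (K₁ * (V x + b) + K₂) := by
  have := hPbarm n
  have hW : Measurable fun z' : X × Θ => ENNReal.ofReal (V z'.1) :=
    (hVmeas.comp measurable_fst).ennreal_ofReal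
  calc ∫⁻ z', G z' ∂(Pbar n (x, θ))
      ≤ ∫⁻ z', ENNReal.ofReal (K₁ * V z'.1 + K₂) ∂(Pbar n (x, θ)) := lintegral_mono hG
    _ = ∫⁻ z', (ENNReal.ofReal K₁ * ENNReal.ofReal (V z'.1) + ENNReal.ofReal K₂)
          ∂(Pbar n (x, θ)) := by
        refine lintegral_congr fun z' => ?_
        rw [ENNReal.ofReal_add (mul_nonneg hK₁ (by linarith [hV1 z'.1])) hK₂,
          ENNReal.ofReal_mul hK₁]
    _ = ENNReal.ofReal K₁ * (∫⁻ z', ENNReal.ofReal (V z'.1) ∂(Pbar n (x, θ)))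
          + ENNReal.ofReal K₂ := by
        rw [lintegral_add_right _ measurable_const, lintegral_const_mul _ hW, lintegral_const]
        simp
    _ ≤ ENNReal.ofReal K₁ * (ENNReal.ofReal (V x) + ENNReal.ofReal b) + ENNReal.ofReal K₂ := by
        gcongr
        exact lintegral_V_Pbar hcompat hVmeas hV1 hα1 hb hc hdrift n x θ
    _ = ENNReal.ofReal (K₁ * (V x + b) + K₂) := by
        rw [← ENNReal.ofReal_add (by linarith [hV1 x]) hb.le, ← ENNReal.ofReal_mul hK₁,
          ← ENNReal.ofReal_add (mul_nonneg hK₁ (by linarith [hV1 x])) hK₂]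

variable (hβ1 : β ≤ 1) (hfb : ∀ x, |f x| ≤ Mf * V x ^ β)

include hβ1 hfb

lemma lintegral_norm_term (j l : ℕ) (z : X × Θ) :
    ∫⁻ ω, ENNReal.ofReal ‖f ((ω j).1) - ∫ y, f y ∂π‖ ∂(law l z) ≤
      ENNReal.ofReal (Mf * V z.1 + Mf * (j * b) + |∫ y, f y ∂π|) := by
  have hMf : 0 ≤ Mf := Mf_nonneg hV1 hfb z.1
  exact lintegral_bound_law hPbarm hlaw hcompat hVmeas hV1 hα1 hb hc hdrift hMf (abs_nonneg _)
    j l z fun ω => ENNReal.ofReal_le_ofReal (norm_term_le hV1 hβ1 hfb _)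

lemma integrable_term (hfmeas : Measurable f) (j l : ℕ) (z : X × Θ) :
    Integrable (fun ω => f ((ω j).1) - ∫ y, f y ∂π) (law l z) := by
  refine ⟨((hfmeas.comp (measurable_fst.comp (measurable_pi_apply j))).sub
    measurable_const).aestronglyMeasurable, ?_⟩
  rw [hasFiniteIntegral_iff_norm]
  exact lt_of_le_of_lt
    (lintegral_norm_term hPbarm hlaw hcompat hVmeas hV1 hα1 hb hc hdrift hβ1 hfb j l z)
    ENNReal.ofReal_lt_top

lemma abs_cfun_le (j l : ℕ) (z : X × Θ) :
    |cfun law π f j l z| ≤ Mf * V z.1 + Mf * (j * b) + |∫ y, f y ∂π| := by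
  have hMf : 0 ≤ Mf := Mf_nonneg hV1 hfb z.1
  rw [← Real.norm_eq_abs]
  refine (norm_integral_le_lintegral_norm _).trans ?_
  refine ENNReal.toReal_le_of_le_ofReal (by
    have h0 : 0 ≤ Mf * ((j : ℝ) * b) := mul_nonneg hMf (by positivity)
    nlinarith [hV1 z.1, abs_nonneg (∫ y, f y ∂π)]) ?_
  exact lintegral_norm_term hPbarm hlaw hcompat hVmeas hV1 hα1 hb hc hdrift hβ1 hfb j l z

end Bounds

end Aux3


section Aux4

variable {X Θ : Type*} [MeasurableSpace X] [MeasurableSpace Θ]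
variable {P : Θ → Kernel X X} {Pbar : ℕ → Kernel (X × Θ) (X × Θ)}
variable {law : ℕ → X × Θ → Measure (ℕ → X × Θ)}
variable {V : X → ℝ} {C : Set X} {α b c : ℝ} {π : Measure X} {f : X → ℝ} {Mf β : ℝ}

lemma cfun_zero (hPbarm : ∀ n, IsMarkovKernel (Pbar n)) (hlaw : IsAdaptiveLaw Pbar law)
    (hfmeas : Measurable f) (l : ℕ) (z : X × Θ) :
    cfun law π f 0 l z = f z.1 - ∫ y, f y ∂π := by
  have hg : Measurable fun w : X × Θ => f w.1 - ∫ y, f y ∂π :=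
    (hfmeas.comp measurable_fst).sub measurable_const
  have h1 : cfun law π f 0 l z
      = ∫ w, (f w.1 - ∫ y, f y ∂π) ∂((law l z).map (fun ω => ω 0)) :=
    (integral_map (φ := fun ω : ℕ → X × Θ => ω 0)
      (f := fun w : X × Θ => f w.1 - ∫ y, f y ∂π)
      (measurable_pi_apply 0).aemeasurable hg.aestronglyMeasurable).symm
  rw [h1, marginal_zero hPbarm hlaw l z, integral_dirac' _ _ hg.stronglyMeasurable]

lemma cfun_succ (hPbarm : ∀ n, IsMarkovKernel (Pbar n)) (hlaw : IsAdaptiveLaw Pbar law)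
    (hcompat : Compat P Pbar)
    (hVmeas : Measurable V) (hV1 : ∀ x, 1 ≤ V x)
    (hα1 : α ≤ 1) (hb : 0 < b) (hc : 0 < c)
    (hdrift : ∀ (θ : Θ) (x : X),
        (∫⁻ y, ENNReal.ofReal (V y) ∂(P θ x)) ≤
          ENNReal.ofReal (V x - c * V x ^ (1 - α) + b * C.indicator (fun _ => (1 : ℝ)) x))
    (hβ1 : β ≤ 1) (hfb : ∀ x, |f x| ≤ Mf * V x ^ β) (hfmeas : Measurable f)
    (j l : ℕ) (z : X × Θ) :
    cfun law π f (j + 1) l z = ∫ z', cfun law π f j (l + 1) z' ∂(Pbar l z) := by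
  obtain ⟨x, θ⟩ := z
  have := hPbarm l
  have hMf : 0 ≤ Mf := Mf_nonneg hV1 hfb x
  have hg : Measurable fun w : X × Θ => f w.1 - ∫ y, f y ∂π :=
    (hfmeas.comp measurable_fst).sub measurable_const
  have hmf : Measurable fun z' : X × Θ => (law (l + 1) z').map (fun ω => ω j) :=
    (Measure.measurable_map _ (measurable_pi_apply j)).comp (hlaw.meas (l + 1))
  let K : Kernel (X × Θ) (X × Θ) := ⟨fun z' => (law (l + 1) z').map (fun ω => ω j), hmf⟩
  have hK : IsMarkovKernel K := ⟨fun z' => by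
    have := hlaw.prob (l + 1) z'
    exact Measure.isProbabilityMeasure_map (measurable_pi_apply j).aemeasurable⟩
  have hKapp : ∀ z', K z' = (law (l + 1) z').map (fun ω => ω j) := fun _ => rfl
  have hinner : ∀ z', ∫ w, (f w.1 - ∫ y, f y ∂π) ∂(K z') = cfun law π f j (l + 1) z' := by
    intro z'
    rw [hKapp]
    exact integral_map (φ := fun ω : ℕ → X × Θ => ω j)
      (f := fun w : X × Θ => f w.1 - ∫ y, f y ∂π)
      (measurable_pi_apply j).aemeasurable hg.aestronglyMeasurable
  have hint : Integrable (fun p : (X × Θ) × (X × Θ) => f p.2.1 - ∫ y, f y ∂π)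
      ((Pbar l (x, θ)) ⊗ₘ K) := by
    refine ⟨(hg.comp measurable_snd).aestronglyMeasurable, ?_⟩
    have hmeas2 : Measurable fun p : (X × Θ) × (X × Θ) =>
        ENNReal.ofReal ‖f p.2.1 - ∫ y, f y ∂π‖ :=
      (hg.comp measurable_snd).norm.ennreal_ofReal
    rw [hasFiniteIntegral_iff_norm, Measure.lintegral_compProd hmeas2]
    have hin : ∀ z' : X × Θ,
        ∫⁻ w, ENNReal.ofReal ‖f w.1 - ∫ y, f y ∂π‖ ∂(K z')
          ≤ ENNReal.ofReal (Mf * V z'.1 + (Mf * (j * b) + |∫ y, f y ∂π|)) := by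
      intro z'
      rw [hKapp, lintegral_map hg.norm.ennreal_ofReal (measurable_pi_apply j)]
      have h := lintegral_norm_term (π := π) hPbarm hlaw hcompat hVmeas hV1 hα1 hb hc hdrift hβ1 hfb
        j (l + 1) z'
      simpa [add_assoc] using h
    have hK₂ : 0 ≤ Mf * ((j : ℝ) * b) + |∫ y, f y ∂π| := by
      have : 0 ≤ Mf * ((j : ℝ) * b) := mul_nonneg hMf (by positivity)
      positivity
    exact lt_of_le_of_lt
      (lintegral_bound_Pbar hPbarm hlaw hcompat hVmeas hV1 hα1 hb hc hdrift hMf hK₂ l x θ hin)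
      ENNReal.ofReal_lt_top
  have h1 : cfun law π f (j + 1) l (x, θ)
      = ∫ w, (f w.1 - ∫ y, f y ∂π) ∂((law l (x, θ)).map (fun ω => ω (j + 1))) :=
    (integral_map (φ := fun ω : ℕ → X × Θ => ω (j + 1))
      (f := fun w : X × Θ => f w.1 - ∫ y, f y ∂π)
      (measurable_pi_apply (j + 1)).aemeasurable hg.aestronglyMeasurable).symm
  rw [h1, marginal_succ hPbarm hlaw l j (x, θ),
    show (fun z' : X × Θ => (law (l + 1) z').map (fun ω => ω j)) = fun z' => K z' from rfl,
    integral_bind_kernel (Pbar l (x, θ)) K _ hg hint]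
  simp_rw [hinner]

end Aux4

/-- Proposition 4.8 (generalized Poisson equation for the resolvent). -/
theorem resolvent_identity
    {X Θ : Type*} [MeasurableSpace X] [MeasurableSpace Θ]
    (P : Θ → Kernel X X) (hPm : ∀ θ, IsMarkovKernel (P θ))
    (hPθmeas : ∀ (x : X) (A : Set X), MeasurableSet A → Measurable fun θ => P θ x A)
    (Pbar : ℕ → Kernel (X × Θ) (X × Θ)) (hPbarm : ∀ n, IsMarkovKernel (Pbar n))
    (hcompat : Compat P Pbar)
    (law : ℕ → X × Θ → Measure (ℕ → X × Θ)) (hlaw : IsAdaptiveLaw Pbar law)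
    (V : X → ℝ) (hVmeas : Measurable V) (hV1 : ∀ x, 1 ≤ V x)
    (C : Set X) (hCmeas : MeasurableSet C)
    (α b c : ℝ) (hα0 : 0 < α) (hα1 : α ≤ 1) (hb : 0 < b) (hc : 0 < c)
    (hdrift : ∀ (θ : Θ) (x : X),
        (∫⁻ y, ENNReal.ofReal (V y) ∂(P θ x)) ≤
          ENNReal.ofReal (V x - c * V x ^ (1 - α) + b * C.indicator (fun _ => (1 : ℝ)) x))
    (π : Measure X) (hπ : IsProbabilityMeasure π)
    (β : ℝ) (hβ0 : 0 ≤ β) (hβ : β ≤ 1 - α)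
    (f : X → ℝ) (hfmeas : Measurable f) (hfint : Integrable f π)
    (Mf : ℝ) (hfb : ∀ x, |f x| ≤ Mf * V x ^ β)
    (a : ℝ) (ha0 : 0 < a) (ha1 : a < 1) (l : ℕ) (x : X) (θ : Θ) :
    (Summable fun j : ℕ =>
        |(1 - a) ^ (j + 1) * ∫ ω, (f ((ω j).1) - ∫ y, f y ∂π) ∂(law l (x, θ))|) ∧
    f x - (∫ y, f y ∂π) =
      (1 - a)⁻¹ * ghat law π f a l (x, θ) -
        ∫ ω, ghat law π f a (l + 1) (ω 1) ∂(law l (x, θ)) := by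
  have hβ1 : β ≤ 1 := by linarith
  have hMf : 0 ≤ Mf := Mf_nonneg hV1 hfb x
  have hr0 : (0:ℝ) < 1 - a := by linarith
  have hr1 : (1:ℝ) - a < 1 := by linarith
  have hne : (1:ℝ) - a ≠ 0 := ne_of_gt hr0
  have hcb : ∀ (j l' : ℕ) (z : X × Θ),
      |cfun law π f j l' z| ≤ Mf * V z.1 + Mf * (j * b) + |∫ y, f y ∂π| :=
    fun j l' z => abs_cfun_le hPbarm hlaw hcompat hVmeas hV1 hα1 hb hc hdrift hβ1 hfb j l' z
  have hgeom : ∀ A B : ℝ, Summable fun j : ℕ => (1 - a) ^ (j + 1) * (A + B * j) := by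
    intro A B
    have h1 : Summable fun j : ℕ => ((1 - a) * A) * (1 - a) ^ j :=
      (summable_geometric_of_lt_one hr0.le hr1).mul_left _
    have h2 : Summable fun j : ℕ => ((1 - a) * B) * ((j : ℝ) * (1 - a) ^ j) := by
      have h3 := summable_pow_mul_geometric_of_norm_lt_one (R := ℝ) 1 (r := 1 - a)
        (by rw [Real.norm_eq_abs, abs_of_pos hr0]; exact hr1)
      simpa [pow_one] using h3.mul_left ((1 - a) * B)
    refine (h1.add h2).congr fun j => ?_
    ring
  have part1 : Summable fun j : ℕ =>
      |(1 - a) ^ (j + 1) * ∫ ω, (f ((ω j).1) - ∫ y, f y ∂π) ∂(law l (x, θ))| := by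
    refine Summable.of_nonneg_of_le (fun j => abs_nonneg _) (fun j => ?_)
      (hgeom (Mf * V x + |∫ y, f y ∂π|) (Mf * b))
    have h := hcb j l (x, θ)
    rw [abs_mul, abs_pow, abs_of_pos hr0]
    calc (1 - a) ^ (j + 1) * |cfun law π f j l (x, θ)|
        ≤ (1 - a) ^ (j + 1) * (Mf * V x + Mf * (j * b) + |∫ y, f y ∂π|) :=
          mul_le_mul_of_nonneg_left h (by positivity)
      _ = (1 - a) ^ (j + 1) * ((Mf * V x + |∫ y, f y ∂π|) + (Mf * b) * j) := by ring
  refine ⟨part1, ?_⟩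
  have hsumm : Summable fun j : ℕ => (1 - a) ^ (j + 1) * cfun law π f j l (x, θ) :=
    part1.of_abs
  have hkey : ∫ ω, ghat law π f a (l + 1) (ω 1) ∂(law l (x, θ))
      = ∑' j : ℕ, (1 - a) ^ (j + 1) * cfun law π f (j + 1) l (x, θ) := by
    have hF : ∀ j : ℕ, AEStronglyMeasurable
        (fun ω : ℕ → X × Θ => (1 - a) ^ (j + 1) * cfun law π f j (l + 1) (ω 1))
        (law l (x, θ)) := fun j =>
      (((measurable_cfun (π := π) hlaw hfmeas j (l + 1)).comp
        (measurable_pi_apply 1)).const_mul _).aestronglyMeasurable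
    have hlint : ∀ j : ℕ,
        ∫⁻ ω, ‖(1 - a) ^ (j + 1) * cfun law π f j (l + 1) (ω 1)‖₊ ∂(law l (x, θ))
          ≤ ENNReal.ofReal
            ((1 - a) ^ (j + 1) * (Mf * (V x + b) + (Mf * (j * b) + |∫ y, f y ∂π|))) := by
      intro j
      have hpt : ∀ ω : ℕ → X × Θ,
          (‖(1 - a) ^ (j + 1) * cfun law π f j (l + 1) (ω 1)‖₊ : ℝ≥0∞)
            ≤ ENNReal.ofReal (((1 - a) ^ (j + 1) * Mf) * V ((ω 1).1)
              + (1 - a) ^ (j + 1) * (Mf * (j * b) + |∫ y, f y ∂π|)) := by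
        intro ω
        rw [show ((‖(1 - a) ^ (j + 1) * cfun law π f j (l + 1) (ω 1)‖₊ : ℝ≥0∞)) = ENNReal.ofReal ‖(1 - a) ^ (j + 1) * cfun law π f j (l + 1) (ω 1)‖ from (ofReal_norm _).symm]
        apply ENNReal.ofReal_le_ofReal
        rw [norm_mul, norm_pow, Real.norm_eq_abs, abs_of_pos hr0, Real.norm_eq_abs]
        have h3 := mul_le_mul_of_nonneg_left (hcb j (l + 1) (ω 1))
          (le_of_lt (pow_pos hr0 (j + 1)))
        have h4 : ((1 - a) ^ (j + 1) * Mf) * V ((ω 1).1)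
            + (1 - a) ^ (j + 1) * (Mf * (j * b) + |∫ y, f y ∂π|)
            = (1 - a) ^ (j + 1) * (Mf * V ((ω 1).1) + Mf * (j * b) + |∫ y, f y ∂π|) := by
          ring
        rw [h4]
        exact h3
      have hK₁ : 0 ≤ (1 - a) ^ (j + 1) * Mf := by positivity
      have hK₂ : 0 ≤ (1 - a) ^ (j + 1) * (Mf * (j * b) + |∫ y, f y ∂π|) := by
        have : 0 ≤ Mf * ((j : ℝ) * b) := mul_nonneg hMf (by positivity)
        positivity
      refine le_trans (lintegral_bound_law hPbarm hlaw hcompat hVmeas hV1 hα1 hb hc hdrift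
        hK₁ hK₂ 1 l (x, θ) hpt) (le_of_eq ?_)
      congr 1
      push_cast
      ring
    have hub : Summable fun j : ℕ =>
        (1 - a) ^ (j + 1) * (Mf * (V x + b) + (Mf * (j * b) + |∫ y, f y ∂π|)) := by
      refine (hgeom (Mf * (V x + b) + |∫ y, f y ∂π|) (Mf * b)).congr fun j => ?_
      ring
    have hnn : ∀ j : ℕ,
        0 ≤ (1 - a) ^ (j + 1) * (Mf * (V x + b) + (Mf * (j * b) + |∫ y, f y ∂π|)) := by
      intro j
      have h5 : 0 ≤ Mf * (V x + b) := mul_nonneg hMf (by linarith [hV1 x])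
      have h6 : 0 ≤ Mf * ((j : ℝ) * b) := mul_nonneg hMf (by positivity)
      have h7 : 0 ≤ |∫ y, f y ∂π| := abs_nonneg _
      positivity
    have hsum' : (∑' j : ℕ, ∫⁻ ω,
        ‖(1 - a) ^ (j + 1) * cfun law π f j (l + 1) (ω 1)‖₊ ∂(law l (x, θ))) ≠ ⊤ := by
      refine ne_top_of_le_ne_top ?_ (ENNReal.tsum_le_tsum hlint)
      rw [← ENNReal.ofReal_tsum_of_nonneg hnn hub]
      exact ENNReal.ofReal_ne_top
    have hswap := integral_tsum hF hsum'
    calc ∫ ω, ghat law π f a (l + 1) (ω 1) ∂(law l (x, θ))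
        = ∫ ω, ∑' j : ℕ, (1 - a) ^ (j + 1) * cfun law π f j (l + 1) (ω 1)
            ∂(law l (x, θ)) := rfl
      _ = ∑' j : ℕ, ∫ ω, (1 - a) ^ (j + 1) * cfun law π f j (l + 1) (ω 1)
            ∂(law l (x, θ)) := hswap
      _ = ∑' j : ℕ, (1 - a) ^ (j + 1) * cfun law π f (j + 1) l (x, θ) := by
          refine tsum_congr fun j => ?_
          rw [integral_const_mul]
          congr 1
          have hm : ∫ z', cfun law π f j (l + 1) z' ∂((law l (x, θ)).map (fun ω => ω 1))
              = ∫ ω, cfun law π f j (l + 1) (ω 1) ∂(law l (x, θ)) :=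
            integral_map (φ := fun ω : ℕ → X × Θ => ω 1)
              (f := fun z' => cfun law π f j (l + 1) z')
              (measurable_pi_apply 1).aemeasurable
              (measurable_cfun (π := π) hlaw hfmeas j (l + 1)).aestronglyMeasurable
          rw [marginal_one hPbarm hlaw l (x, θ)] at hm
          rw [← hm]
          exact (cfun_succ hPbarm hlaw hcompat hVmeas hV1 hα1 hb hc hdrift hβ1 hfb hfmeas
            j l (x, θ)).symm
  have hghat : ghat law π f a l (x, θ)
      = ∑' j : ℕ, (1 - a) ^ (j + 1) * cfun law π f j l (x, θ) := rfl
  have hsummul : Summable fun j : ℕ => (1 - a) ^ j * cfun law π f j l (x, θ) := by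
    refine (hsumm.mul_left (1 - a)⁻¹).congr fun j => ?_
    rw [pow_succ]
    field_simp
  have h1 : (1 - a)⁻¹ * ∑' j : ℕ, (1 - a) ^ (j + 1) * cfun law π f j l (x, θ)
      = ∑' j : ℕ, (1 - a) ^ j * cfun law π f j l (x, θ) := by
    rw [← tsum_mul_left]
    refine tsum_congr fun j => ?_
    rw [pow_succ]
    field_simp
  have h2 : (∑' j : ℕ, (1 - a) ^ j * cfun law π f j l (x, θ))
      = cfun law π f 0 l (x, θ)
        + ∑' j : ℕ, (1 - a) ^ (j + 1) * cfun law π f (j + 1) l (x, θ) := by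
    have h3 := Summable.tsum_eq_zero_add hsummul
    simpa using h3
  rw [hkey, hghat, h1, h2, cfun_zero hPbarm hlaw hfmeas l (x, θ)]
  ring

end AdaptiveMCMC
end
end
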